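/- arXiv:2506.23865 — 8 statements merged into one kernel-verified Lean document; each statement's English description precedes it below -/
import Mathlib

section
/- Let (S,*) be an adequate partial semigroup, let r be an idempotent ultrafilter in J(S), and let R : P_f(𝓕) → r be any function (i.e., R(F) ∈ r for every F ∈ P_f(𝓕)). Then there exist functions m* : P_f(𝓕) → ℕ, α with α(F) ∈ S^{m*(F)+1} for each F ∈ P_f(𝓕), and τ with τ(F) ∈ 𝓙_{m*(F)} for each F ∈ P_f(𝓕), such that: (1) if F, G ∈ P_f(𝓕) and G ⊊ F, then τ(G)(m*(G)) < τ(F)(1); and (2) if s ∈ ℕ, G_1 ⊊ G_2 ⊊ … ⊊ G_s are members of P_f(𝓕), and f_i ∈ G_i for each i ∈ {1,…,s}, then ∏_{i=1}^{s} ((∏_{j=1}^{m*(G_i)} α(G_i)(j) * f_i(τ(G_i)(j))) * α(G_i)(m*(G_i)+1)) is defined and belongs to R(G_1). -/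
open scoped Classical

namespace PSG

variable {S : Type}

/-- A partial binary operation: `op a b = some c` means the product is defined and equals `c`.
Associativity: `(a*b)*c = a*(b*c)` in the sense that either side is defined iff the other is,
and then they are equal. -/
def IsPSemigroup (op : S → S → Option S) : Prop :=
  ∀ a b c : S, ((op a b).bind fun x => op x c) = ((op b c).bind fun y => op a y)

/-- commutativity: `a*b = b*a` whenever either side is defined. -/
def IsComm (op : S → S → Option S) : Prop := ∀ a b : S, op a b = op b a

/-- `φ(s) = {t : s*t is defined}` -/
def phiSet (op : S → S → Option S) (s : S) : Set S := {t | (op s t).isSome}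

/-- `σ(H) = ⋂_{s ∈ H} φ(s)` -/
def sigmaSet (op : S → S → Option S) (H : Finset S) : Set S := {t | ∀ s ∈ H, (op s t).isSome}

/-- `s⁻¹A = {t ∈ φ(s) : s*t ∈ A}` -/
def sInv (op : S → S → Option S) (s : S) (A : Set S) : Set S :=
  {t | ∃ v, op s t = some v ∧ v ∈ A}

/-- `(S,*)` is adequate: `σ(H) ≠ ∅` for all `H ∈ P_f(S)`. -/
def IsAdequate (op : S → S → Option S) : Prop :=
  ∀ H : Finset S, H.Nonempty → (sigmaSet op H).Nonempty

/-- sequence a list of options: `some` of the list of values iff all are defined. -/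
def seqO {α : Type*} : List (Option α) → Option (List α)
  | [] => some []
  | x :: l => x.bind fun a => (seqO l).map fun r => a :: r

/-- the product of a list of elements, in order; undefined for the empty list. -/
def oprod (op : S → S → Option S) : List S → Option S
  | [] => none
  | [a] => some a
  | a :: b :: l => (oprod op (b :: l)).bind fun x => op a x

/-- the product of a list of partially-defined elements. -/
def oprodO (op : S → S → Option S) (l : List (Option S)) : Option S :=
  (seqO l).bind (oprod op)

/-- `∏_{t ∈ H} f(t)`, the product in increasing order of indices. -/
def finProd (op : S → S → Option S) (f : ℕ → S) (H : Finset ℕ) : Option S :=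
  oprod op ((H.sort (· ≤ ·)).map f)

/-- `f` is an adequate sequence in `(S,*)`. -/
def IsAdequateSeq (op : S → S → Option S) (f : ℕ → S) : Prop :=
  (∀ H : Finset ℕ, H.Nonempty → (finProd op f H).isSome) ∧
  (∀ F : Finset S, F.Nonempty → ∃ m : ℕ, ∀ H : Finset ℕ, H.Nonempty → (∀ t ∈ H, m ≤ t) →
    ∀ x : S, finProd op f H = some x → x ∈ sigmaSet op F)

/-- `F ∈ P_f(𝓕)`: a nonempty finite set of adequate sequences. -/
def MemPfF (op : S → S → Option S) (F : Finset (ℕ → S)) : Prop :=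
  F.Nonempty ∧ ∀ f ∈ F, IsAdequateSeq op f

/-- `(∏_{i=1}^m a(i)*b(i)) * a(m+1)` -/
def jProd (op : S → S → Option S) {m : ℕ} (a : Fin (m + 1) → S) (b : Fin m → S) : Option S :=
  oprodO op ((List.ofFn fun j : Fin m => op (a j.castSucc) (b j)) ++ [some (a (Fin.last m))])

/-- `A` is a J-set in `(S,*)`. -/
def IsJSet (op : S → S → Option S) (A : Set S) : Prop :=
  ∀ F : Finset (ℕ → S), MemPfF op F → ∀ L : Finset S, L.Nonempty →
    ∃ m : ℕ, 0 < m ∧ ∃ (a : Fin (m + 1) → S) (t : Fin m → ℕ), StrictMono t ∧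
      ∀ f ∈ F, ∃ x : S, jProd op a (fun j => f (t j)) = some x ∧ x ∈ A ∧ x ∈ sigmaSet op L

/-- `p ∈ δS`, i.e. `φ(x) ∈ p` for every `x ∈ S` (equivalently `p ∈ ⋂_x cl_{βS} φ(x)`). -/
def InDelta (op : S → S → Option S) (p : Ultrafilter S) : Prop := ∀ x : S, phiSet op x ∈ p

/-- the collection of sets constituting the product `p*q` of ultrafilters:
`A ∈ p*q ↔ {a : a⁻¹A ∈ q} ∈ p`. -/
def preMul (op : S → S → Option S) (p q : Ultrafilter S) : Set (Set S) :=
  {A : Set S | {a : S | sInv op a A ∈ q} ∈ p}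

/-- `p` is an idempotent: `p*p = p` (as collections of sets). -/
def IsIdem (op : S → S → Option S) (p : Ultrafilter S) : Prop :=
  ∀ A : Set S, A ∈ p ↔ A ∈ preMul op p p

/-- `mul` realizes the semigroup operation of `δS`: whenever `q ∈ δS`,
`mul p q` is the ultrafilter `p*q`. -/
def MulCompat (op : S → S → Option S) (mul : Ultrafilter S → Ultrafilter S → Ultrafilter S) :
    Prop :=
  ∀ p q : Ultrafilter S, InDelta op q → ∀ A : Set S, A ∈ mul p q ↔ A ∈ preMul op p q

/-- a (two-sided) ideal of `(δS,*)`. -/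
def IsIdealK (op : S → S → Option S) (mul : Ultrafilter S → Ultrafilter S → Ultrafilter S)
    (I : Set (Ultrafilter S)) : Prop :=
  I.Nonempty ∧ (∀ p ∈ I, InDelta op p) ∧
  (∀ p : Ultrafilter S, InDelta op p → ∀ q ∈ I, mul p q ∈ I) ∧
  (∀ q ∈ I, ∀ p : Ultrafilter S, InDelta op p → mul q p ∈ I)

/-- `K(δS)`, the smallest two-sided ideal of `δS` (= the intersection of all two-sided ideals). -/
def KSet (op : S → S → Option S) (mul : Ultrafilter S → Ultrafilter S → Ultrafilter S) :
    Set (Ultrafilter S) := ⋂₀ {I | IsIdealK op mul I}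

/-- `A` is piecewise syndetic: `cl_{βS}(A) ∩ K(δS) ≠ ∅`. -/
def IsPWSyndetic (op : S → S → Option S) (mul : Ultrafilter S → Ultrafilter S → Ultrafilter S)
    (A : Set S) : Prop := ∃ p : Ultrafilter S, A ∈ p ∧ p ∈ KSet op mul

/-- `A` is syndetic: `σ(H) ⊆ ⋃_{t∈H} t⁻¹A` for some `H ∈ P_f(S)`. -/
def IsSyndetic (op : S → S → Option S) (A : Set S) : Prop :=
  ∃ H : Finset S, H.Nonempty ∧ sigmaSet op H ⊆ ⋃ t ∈ H, sInv op t A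

/-! ### sums in `S ∪ {0}` (`Option S` with `none` playing the role of the adjoined identity `0`) -/

/-- the partial operation on `S ∪ {0}`, with `0 = none` the identity. -/
def zop (op : S → S → Option S) : Option S → Option S → Option (Option S)
  | none, y => some y
  | some a, none => some (some a)
  | some a, some b => (op a b).map some

/-- sum of a list of elements of `S ∪ {0}`; the empty sum is `0`. -/
def zsum (op : S → S → Option S) (l : List (Option S)) : Option (Option S) :=
  l.foldr (fun x acc => acc.bind fun y => zop op x y) (some none)

/-- sum of a finite family of elements of `S ∪ {0}`. -/
noncomputable def zsumFinset (op : S → S → Option S) {γ : Type*} (A : Finset γ) (g : γ → Option S) :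
    Option (Option S) := zsum op (A.toList.map g)

/-- the members of `F_d` (nonempty, of cardinality at most `d`) contained in `α`. -/
def fdSubsets (d : ℕ) (α : Finset ℕ) : Finset (Finset ℕ) :=
  α.powerset.filter fun γ => γ.Nonempty ∧ γ.card ≤ d

/-- `⟨m_γ⟩_{γ ∈ F_d}` generates `⟨v_α⟩` (on indices `α` satisfying `P`):
`v_α = Σ_{γ ⊆ α, γ ∈ F_d} m_γ`, all the sums being defined (and lying in `S`, not `0`). -/
def GeneratesVIP (op : S → S → Option S) (P : Finset ℕ → Prop) (d : ℕ)
    (m : Finset ℕ → Option S) (v : Finset ℕ → S) : Prop :=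
  ∀ α : Finset ℕ, α.Nonempty → P α →
    zsumFinset op (fdSubsets d α) m = some (some (v α))

/-- `⟨v_α⟩` (indexed by the `α` satisfying `P`) is a VIP system. -/
def IsVIP (op : S → S → Option S) (P : Finset ℕ → Prop) (v : Finset ℕ → S) : Prop :=
  ∃ d : ℕ, 0 < d ∧ ∃ m : Finset ℕ → Option S, GeneratesVIP op P d m v

/-- `{⟨v_α^{(i)}⟩ : i ∈ ι}` is an adequate set of VIP systems (indexed by the `α` with `P α`). -/
def IsAdequateVIPFamily {ι : Type*} (op : S → S → Option S) (P : Finset ℕ → Prop)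
    (v : ι → Finset ℕ → S) : Prop :=
  ∃ d t : ℕ, 0 < d ∧ 0 < t ∧
  ∃ (m : ι → Finset ℕ → Option S) (n : Fin t → Finset ℕ → Option S) (E : ι → Finset (Fin t)),
    (∀ i : ι, GeneratesVIP op P d (m i) (v i)) ∧
    (∀ j : Fin t, ∃ u : Finset ℕ → S, GeneratesVIP op P d (n j) u) ∧
    (∀ H : Finset S, H.Nonempty → ∃ M : ℕ, ∀ l : ℕ, 0 < l → ∀ γ : Fin l → Finset ℕ,
      Function.Injective γ → (∀ j, (γ j).Nonempty ∧ (γ j).card ≤ d) →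
      (∀ j, ¬ γ j ⊆ Finset.Iic M) →
      ∃ x : Option S,
        zsumFinset op (Finset.univ : Finset (Fin t × Fin l)) (fun ij => n ij.1 (γ ij.2))
          = some x ∧
        (x = none ∨ ∃ s : S, x = some s ∧ s ∈ sigmaSet op H)) ∧
    (∀ i : ι, ∀ γ : Finset ℕ, γ.Nonempty → γ.card ≤ d →
      zsumFinset op (E i) (fun j => n j γ) = some (m i γ))

/-- `𝓐` is an adequately partition regular family of subsets of `S`. -/
def AdequatelyPR (op : S → S → Option S) (𝓐 : Set (Set S)) : Prop :=
  ∀ H : Finset S, H.Nonempty → ∀ r : ℕ, 0 < r →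
    ∃ F : Finset S, ↑F ⊆ sigmaSet op H ∧
      ∀ C : Fin r → Set S, (↑F : Set S) ⊆ (⋃ j, C j) → ∃ j, ∃ A ∈ 𝓐, A ⊆ C j

/-- `𝓐` is shift invariant: `A + x ∈ 𝓐` for `A ∈ 𝓐`, `x ∈ σ(A)`. -/
def ShiftInvariant (op : S → S → Option S) (𝓐 : Set (Set S)) : Prop :=
  ∀ A ∈ 𝓐, ∀ x : S, (∀ a ∈ A, (op a x).isSome) →
    {y : S | ∃ a ∈ A, op a x = some y} ∈ 𝓐

end PSG

namespace CSTAux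
open PSG
variable {S : Type}

theorem seqO_concat {l : List (Option S)} {lv : List S} (h : seqO l = some lv) (x : S) :
    seqO (l ++ [some x]) = some (lv ++ [x]) := by
  induction l generalizing lv with
  | nil =>
    simp only [seqO] at h
    cases h
    simp [seqO]
  | cons y l ih =>
    simp only [seqO] at h ⊢
    rcases y with _ | a
    · simp at h
    · simp only [Option.bind_some] at h ⊢
      rcases hl : seqO l with _ | lv'
      · rw [hl] at h; simp at h
      · rw [hl] at h
        simp only [Option.map_some] at h
        cases h
        have := ih hl
        simp only [List.cons_append] at this ⊢
        simp [seqO, this]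

theorem oprod_cons_cons (op : S → S → Option S) (a b : S) (l : List S) :
    oprod op (a :: b :: l) = (oprod op (b :: l)).bind fun x => op a x := rfl

theorem oprod_concat (op : S → S → Option S) (hps : IsPSemigroup op) :
    ∀ (l : List S) (a x : S),
      oprod op ((a :: l) ++ [x]) = (oprod op (a :: l)).bind fun z => op z x := by
  intro l
  induction l with
  | nil => intro a x; simp [oprod]
  | cons b l ih =>
    intro a x
    have key : oprod op ((a :: b :: l) ++ [x]) = (oprod op ((b :: l) ++ [x])).bind fun w => op a w := rfl
    rw [key, ih b x, oprod_cons_cons]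
    rcases hbl : oprod op (b :: l) with _ | w
    · simp
    · simp only [Option.bind_some]
      exact (hps a w x).symm

theorem sort_image_add (c : ℕ) (H : Finset ℕ) :
    (H.image (· + c)).sort (· ≤ ·) = (H.sort (· ≤ ·)).map (· + c) := by
  have hinj : Function.Injective (· + c : ℕ → ℕ) := fun a b hab => by
    simpa using hab
  refine (fun hp hs => List.Perm.eq_of_pairwise' (Finset.pairwise_sort _ _) hs hp) ?_ ?_
  · rw [← Multiset.coe_eq_coe]
    have h1 : ((H.image (· + c)).sort (· ≤ ·) : Multiset ℕ) = (H.image (· + c)).val :=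
      Finset.sort_eq _ _
    have h2 : (H.image (· + c)).val = H.val.map (· + c) := by
      rw [Finset.image_val, Multiset.dedup_eq_self.2 (H.nodup.map hinj)]
    have h3 : ((H.sort (· ≤ ·)).map (· + c) : Multiset ℕ) = (H.val).map (· + c) := by
      rw [← Multiset.map_coe, Finset.sort_eq]
    rw [h1, h2, h3]
  · exact List.Pairwise.map _ (fun a b hab => by omega) (Finset.pairwise_sort H _)

theorem finProd_shift (op : S → S → Option S) (f : ℕ → S) (c : ℕ) (H : Finset ℕ) :
    finProd op (fun k => f (k + c)) H = finProd op f (H.image (· + c)) := by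
  unfold finProd
  rw [sort_image_add, List.map_map]
  rfl

theorem adequate_shift {op : S → S → Option S} {f : ℕ → S} (h : IsAdequateSeq op f) (c : ℕ) :
    IsAdequateSeq op (fun k => f (k + c)) := by
  constructor
  · intro H hH
    rw [finProd_shift]
    exact h.1 _ (hH.image _)
  · intro F hF
    obtain ⟨m, hm⟩ := h.2 F hF
    refine ⟨m, fun H hH hHm x hx => ?_⟩
    rw [finProd_shift] at hx
    refine hm _ (hH.image _) ?_ x hx
    intro t ht
    simp only [Finset.mem_image] at ht
    obtain ⟨u, hu, rfl⟩ := ht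
    have := hHm u hu
    omega

end CSTAux

namespace CSTAux
open PSG
variable {S : Type}

/-- the star set `A⋆` with respect to an idempotent ultrafilter `r`. -/
def star (op : S → S → Option S) (r : Ultrafilter S) (A : Set S) : Set S :=
  {x | x ∈ A ∧ sInv op x A ∈ r}

theorem star_subset (op : S → S → Option S) (r : Ultrafilter S) (A : Set S) :
    star op r A ⊆ A := fun _ h => h.1

theorem star_mem {op : S → S → Option S} {r : Ultrafilter S} (hridem : IsIdem op r)
    {A : Set S} (hA : A ∈ r) : star op r A ∈ r := by
  have h2 : {a : S | sInv op a A ∈ r} ∈ r := (hridem A).1 hA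
  exact Filter.inter_mem hA h2

theorem sInv_comp {op : S → S → Option S} (hps : IsPSemigroup op) {x y v : S}
    (hxy : op x y = some v) (A : Set S) :
    sInv op v A = sInv op y (sInv op x A) := by
  have key := hps x y
  ext u
  have h : ∀ w : S, op v u = some w ↔ ∃ z, op y u = some z ∧ op x z = some w := by
    intro w
    have h1 := key u
    rw [hxy] at h1
    simp only [Option.bind_some] at h1
    rw [h1]
    exact Option.bind_eq_some_iff
  constructor
  · rintro ⟨w, hw, hwA⟩
    obtain ⟨z, hz, hzw⟩ := (h w).1 hw
    exact ⟨z, hz, w, hzw, hwA⟩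
  · rintro ⟨z, hz, w, hzw, hwA⟩
    exact ⟨w, (h w).2 ⟨z, hz, hzw⟩, hwA⟩

theorem star_step {op : S → S → Option S} {r : Ultrafilter S} (hps : IsPSemigroup op)
    (hridem : IsIdem op r) {A : Set S} (hA : A ∈ r) {x : S} (hx : x ∈ star op r A) :
    sInv op x (star op r A) ∈ r := by
  have hB : sInv op x A ∈ r := hx.2
  have hB2 : {y : S | sInv op y (sInv op x A) ∈ r} ∈ r := (hridem _).1 hB
  refine Filter.mem_of_superset (Filter.inter_mem hB hB2) ?_
  rintro y ⟨⟨v, hv, hvA⟩, hy2⟩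
  refine ⟨v, hv, hvA, ?_⟩
  rw [sInv_comp hps hv A]
  exact hy2

theorem chain_card {β : Type*} {s : ℕ} (G : Fin s → Finset β)
    (hne : ∀ i, (G i).Nonempty) (hchain : ∀ i j : Fin s, i < j → G i ⊂ G j) :
    ∀ i : Fin s, i.1 + 1 ≤ (G i).card := by
  have key : ∀ k (hk : k < s), k + 1 ≤ (G ⟨k, hk⟩).card := by
    intro k
    induction k with
    | zero => intro hk; exact Finset.card_pos.2 (hne _)
    | succ n ihn =>
      intro hk
      have h1 := ihn (by omega)
      have h2 := Finset.card_lt_card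
        (hchain ⟨n, by omega⟩ ⟨n + 1, hk⟩ (by simp [Fin.lt_def]))
      omega
  exact fun i => key i.1 i.2

theorem chain_subset_last {β : Type*} {s : ℕ} (hs : 0 < s) (G : Fin s → Finset β)
    (hGc : ∀ i j : Fin s, i < j → G i ⊂ G j) (F : Finset β)
    (hGl : G ⟨s - 1, Nat.sub_lt hs Nat.one_pos⟩ = F) (i : Fin s) : G i ⊆ F := by
  rcases eq_or_ne i.1 (s - 1) with h | h
  · have : i = ⟨s - 1, Nat.sub_lt hs Nat.one_pos⟩ := Fin.ext h
    rw [this, hGl]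
  · have hi := i.2
    have hlt : i < (⟨s - 1, Nat.sub_lt hs Nat.one_pos⟩ : Fin s) := Fin.lt_def.2 (show i.1 < s - 1 by omega)
    exact (hGl ▸ hGc i _ hlt).subset

end CSTAux


namespace CSTAux
open PSG
variable {S : Type}

structure PD (S : Type) where
  m : ℕ
  a : Fin (m + 1) → S
  t : Fin m → ℕ

def defPD (s₀ : S) : PD S := ⟨1, fun _ => s₀, fun _ => 0⟩

def Y (op : S → S → Option S) (d : PD S) (f : ℕ → S) : Option S :=
  jProd op d.a fun j => f (d.t j)

def GoodAt (op : S → S → Option S) (r : Ultrafilter S) (R : Finset (ℕ → S) → Set S)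
    (D : Finset (ℕ → S) → PD S) (F : Finset (ℕ → S)) : Prop :=
  (0 < (D F).m ∧ StrictMono (D F).t) ∧
  (∀ G, MemPfF op G → G ⊂ F →
    ∀ (j : Fin (D G).m) (j' : Fin (D F).m), (D G).t j < (D F).t j') ∧
  (∀ s : ℕ, ∀ hs : 0 < s, ∀ G : Fin s → Finset (ℕ → S),
    (∀ i, MemPfF op (G i)) → (∀ i j : Fin s, i < j → G i ⊂ G j) →
    G ⟨s - 1, Nat.sub_lt hs Nat.one_pos⟩ = F →
    ∀ f : Fin s → ℕ → S, (∀ i, f i ∈ G i) →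
    ∃ x : S, oprodO op (List.ofFn fun i : Fin s => Y op (D (G i)) (f i)) = some x ∧
      x ∈ star op r (R (G ⟨0, hs⟩)))

theorem GoodAt_congr {op : S → S → Option S} {r : Ultrafilter S}
    {R : Finset (ℕ → S) → Set S} {D D' : Finset (ℕ → S) → PD S} {F : Finset (ℕ → S)}
    (h : ∀ G, G ⊆ F → D G = D' G) (hG : GoodAt op r R D F) : GoodAt op r R D' F := by
  obtain ⟨h1, h2, h3⟩ := hG
  have eF : D F = D' F := h F (subset_refl F)
  refine ⟨by rw [← eF]; exact h1, ?_, ?_⟩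
  · intro G hGm hGF
    rw [← h G hGF.subset, ← eF]
    exact h2 G hGm hGF
  · intro s hs G hGm hGc hGl f hf
    have hsub : ∀ i, G i ⊆ F := chain_subset_last hs G hGc F hGl
    have e : (fun i : Fin s => Y op (D' (G i)) (f i)) = fun i => Y op (D (G i)) (f i) := by
      funext i; rw [← h (G i) (hsub i)]
    rw [e]
    exact h3 s hs G hGm hGc hGl f hf

def ChIdx (F : Finset (ℕ → S)) : Type :=
  (s : Fin (F.card + 1)) × (Fin s.1 → {G // G ∈ F.powerset} × {f : ℕ → S // f ∈ F})

noncomputable instance (F : Finset (ℕ → S)) : Fintype (ChIdx F) := by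
  unfold ChIdx; infer_instance

def cG {F : Finset (ℕ → S)} (i : ChIdx F) (k : Fin i.1.1) : Finset (ℕ → S) := (i.2 k).1.1

def cf {F : Finset (ℕ → S)} (i : ChIdx F) (k : Fin i.1.1) : ℕ → S := (i.2 k).2.1

def ValidC (op : S → S → Option S) (F : Finset (ℕ → S)) (i : ChIdx F) : Prop :=
  0 < i.1.1 ∧ (∀ k, MemPfF op (cG i k)) ∧ (∀ k l, k < l → cG i k ⊂ cG i l) ∧
  (∀ k, cf i k ∈ cG i k) ∧
  ∀ h : 0 < i.1.1, cG i ⟨i.1.1 - 1, Nat.sub_lt h Nat.one_pos⟩ ⊂ F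

noncomputable def ESet (op : S → S → Option S) (r : Ultrafilter S)
    (R : Finset (ℕ → S) → Set S) (D : Finset (ℕ → S) → PD S)
    (F : Finset (ℕ → S)) (i : ChIdx F) : Set S :=
  if h : ValidC op F i then
    {x | ∀ z : S,
      oprodO op (List.ofFn fun k => Y op (D (cG i k)) (cf i k)) = some z →
      x ∈ sInv op z (star op r (R (cG i ⟨0, h.1⟩)))}
  else Set.univ

theorem ESet_mem {op : S → S → Option S} {r : Ultrafilter S}
    {R : Finset (ℕ → S) → Set S} {D : Finset (ℕ → S) → PD S} {F : Finset (ℕ → S)}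
    (hps : IsPSemigroup op) (hridem : IsIdem op r)
    (hR : ∀ G, MemPfF op G → R G ∈ r)
    (IH : ∀ G, G ⊂ F → MemPfF op G → GoodAt op r R D G) (i : ChIdx F) :
    ESet op r R D F i ∈ r := by
  unfold ESet
  split_ifs with h
  · obtain ⟨hpos, hmem, hchain, hfmem, hlast⟩ := id h
    have hIH := IH _ (hlast hpos) (hmem _)
    obtain ⟨z, hz1, hz2⟩ := hIH.2.2 i.1.1 hpos (cG i) hmem hchain rfl (cf i) hfmem
    refine Filter.mem_of_superset (star_step hps hridem (hR _ (hmem _)) hz2) ?_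
    intro x hx z' hz'
    rw [hz1] at hz'
    cases hz'
    exact hx
  · exact Filter.univ_mem

end CSTAux


namespace CSTAux
open PSG
variable {S : Type}

theorem exists_good {op : S → S → Option S} {r : Ultrafilter S}
    {R : Finset (ℕ → S) → Set S}
    (hps : IsPSemigroup op) (hridem : IsIdem op r)
    (hrJ : ∀ A ∈ r, IsJSet op A) (hR : ∀ G, MemPfF op G → R G ∈ r)
    (s₀ : S) (D : Finset (ℕ → S) → PD S) (F : Finset (ℕ → S)) (hF : MemPfF op F)
    (IH : ∀ G, G ⊂ F → MemPfF op G → GoodAt op r R D G) :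
    ∃ d : PD S, GoodAt op r R (Function.update D F d) F := by
  classical
  set N : ℕ := F.powerset.sup (fun G => Finset.univ.sup fun j => (D G).t j) with hN
  set c : ℕ := N + 1 with hc
  set Dset : Set S := star op r (R F) ∩ ⋂ i : ChIdx F, ESet op r R D F i with hDsetdef
  have hDset : Dset ∈ r := by
    refine Filter.inter_mem (star_mem hridem (hR F hF)) ?_
    haveI : Finite (ChIdx F) := by infer_instance
    exact Filter.iInter_mem.2 fun i => ESet_mem hps hridem hR IH i
  have hJ : IsJSet op Dset := hrJ _ hDset
  have hF'mem : MemPfF op (F.image (fun f => fun k => f (k + c))) := by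
    refine ⟨hF.1.image _, ?_⟩
    intro g hg
    simp only [Finset.mem_image] at hg
    obtain ⟨f, hf, rfl⟩ := hg
    exact adequate_shift (hF.2 f hf) c
  obtain ⟨m, hm, a, t, ht, hall⟩ := hJ _ hF'mem {s₀} (Finset.singleton_nonempty s₀)
  have hx : ∀ f ∈ F, ∃ x : S,
      Y op ⟨m, a, fun j => t j + c⟩ f = some x ∧ x ∈ Dset := by
    intro f hf
    obtain ⟨x, hx1, hx2, _⟩ := hall _ (Finset.mem_image_of_mem _ hf)
    exact ⟨x, hx1, hx2⟩
  refine ⟨⟨m, a, fun j => t j + c⟩, ?_, ?_, ?_⟩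
  · rw [Function.update_self]
    refine ⟨hm, fun i j hij => ?_⟩
    show t i + c < t j + c
    have := ht hij; omega
  · intro G hGm hGF
    rw [Function.update_of_ne hGF.ne, Function.update_self]
    intro j j'
    have h1 : (D G).t j ≤ N := by
      rw [hN]
      exact le_trans (Finset.le_sup (Finset.mem_univ j))
        (Finset.le_sup (f := fun G => Finset.univ.sup fun j => (D G).t j)
          (Finset.mem_powerset.2 hGF.subset))
    show (D G).t j < t j' + c
    omega
  · intro s hs G hGm hGc hGl f hf
    obtain ⟨s0, rfl⟩ : ∃ s0, s = s0 + 1 := ⟨s - 1, by omega⟩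
    have hlast : G (Fin.last s0) = F := hGl
    have hsub : ∀ i, G i ⊆ F := chain_subset_last hs G hGc F hGl
    obtain ⟨x, hYx, hxmem⟩ := hx (f (Fin.last s0)) (hlast ▸ hf (Fin.last s0))
    have hupdlast :
        Function.update D F (⟨m, a, fun j => t j + c⟩ : PD S) (G (Fin.last s0)) =
          (⟨m, a, fun j => t j + c⟩ : PD S) := by
      rw [hlast, Function.update_self]
    rw [List.ofFn_succ']
    rcases Nat.eq_zero_or_pos s0 with hs0 | hs0
    · subst hs0
      refine ⟨x, ?_, ?_⟩
      · simp only [List.ofFn_zero, List.concat_eq_append, List.nil_append]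
        rw [hupdlast, hYx]
        rfl
      · have h0 : G ⟨0, hs⟩ = F := hlast
        rw [h0]
        exact hxmem.1
    · -- prefix chain
      have hupd : ∀ i : Fin s0,
          Function.update D F (⟨m, a, fun j => t j + c⟩ : PD S) (G i.castSucc) =
            D (G i.castSucc) := by
        intro i
        exact Function.update_of_ne (hlast ▸ hGc i.castSucc (Fin.last s0)
          (Fin.castSucc_lt_last i)).ne _ _
      have hG'chain : ∀ k l : Fin s0, k < l → G k.castSucc ⊂ G l.castSucc :=
        fun k l hkl => hGc _ _ (Fin.castSucc_lt_castSucc_iff.2 hkl)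
      have hG'mem : ∀ k : Fin s0, MemPfF op (G k.castSucc) := fun k => hGm _
      have hG'sub : ∀ k : Fin s0, G k.castSucc ⊂ F :=
        fun k => hlast ▸ hGc k.castSucc (Fin.last s0) (Fin.castSucc_lt_last k)
      have hGoodpre : GoodAt op r R D
          (G (Fin.castSucc ⟨s0 - 1, Nat.sub_lt hs0 Nat.one_pos⟩)) :=
        IH _ (hG'sub _) (hG'mem _)
      obtain ⟨z, hz1, hz2⟩ := hGoodpre.2.2 s0 hs0 (fun k => G k.castSucc) hG'mem hG'chain
        rfl (fun k => f k.castSucc) (fun k => hf _)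
      have hcard : s0 < F.card + 1 := by
        have h1 := chain_card (fun k : Fin s0 => G k.castSucc)
          (fun k => (hG'mem k).1) hG'chain ⟨s0 - 1, Nat.sub_lt hs0 Nat.one_pos⟩
        have h2 := Finset.card_le_card (hG'sub ⟨s0 - 1, Nat.sub_lt hs0 Nat.one_pos⟩).subset
        simp only at h1
        omega
      have hvalid : ValidC op F
          (⟨⟨s0, hcard⟩, fun k =>
            (⟨G k.castSucc, Finset.mem_powerset.2 (hG'sub k).subset⟩,
             ⟨f k.castSucc, hsub _ (hf _)⟩)⟩ : ChIdx F) :=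
        ⟨hs0, hG'mem, hG'chain, fun k => hf _, fun _ => hG'sub _⟩
      have hxE0 := Set.mem_iInter.1 hxmem.2
        (⟨⟨s0, hcard⟩, fun k =>
            (⟨G k.castSucc, Finset.mem_powerset.2 (hG'sub k).subset⟩,
             ⟨f k.castSucc, hsub _ (hf _)⟩)⟩ : ChIdx F)
      unfold ESet at hxE0
      rw [dif_pos hvalid] at hxE0
      obtain ⟨x', hzx', hx'star⟩ : x ∈ sInv op z (star op r (R (G ⟨0, hs⟩))) :=
        hxE0 z hz1
      refine ⟨x', ?_, ?_⟩
      · have hlist : (List.ofFn fun i : Fin s0 =>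
            Y op (Function.update D F (⟨m, a, fun j => t j + c⟩ : PD S) (G i.castSucc))
              (f i.castSucc)) =
            List.ofFn fun k : Fin s0 => Y op (D (G k.castSucc)) (f k.castSucc) := by
          refine congrArg _ (funext fun i => ?_)
          rw [hupd i]
        obtain ⟨lv, hlv, hlvprod⟩ : ∃ lv,
            seqO (List.ofFn fun k : Fin s0 => Y op (D (G k.castSucc)) (f k.castSucc))
              = some lv ∧ oprod op lv = some z := Option.bind_eq_some_iff.1 hz1
        obtain ⟨a0, lv', rfl⟩ : ∃ a0 lv', lv = a0 :: lv' := by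
          cases lv with
          | nil => rw [show oprod op [] = none from rfl] at hlvprod; exact absurd hlvprod (by simp)
          | cons a0 lv' => exact ⟨a0, lv', rfl⟩
        rw [List.concat_eq_append, hlist, hupdlast, hYx]
        show (seqO _).bind (oprod op) = some x'
        rw [seqO_concat hlv x]
        simp only [Option.bind_some]
        rw [oprod_concat op hps lv' a0 x, hlvprod]
        simpa using hzx'
      · exact hx'star
end CSTAux


namespace CSTAux
open PSG
variable {S : Type}

noncomputable def build (op : S → S → Option S) (r : Ultrafilter S)
    (R : Finset (ℕ → S) → Set S) (s₀ : S) : Finset (ℕ → S) → PD S := fun F =>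
  if h : ∃ d : PD S, GoodAt op r R
      (Function.update (fun G => if hG : G ⊂ F then build op r R s₀ G else defPD s₀) F d) F
  then h.choose else defPD s₀
termination_by F => F.card
decreasing_by all_goals exact Finset.card_lt_card hG

theorem build_good {op : S → S → Option S} {r : Ultrafilter S}
    {R : Finset (ℕ → S) → Set S}
    (hps : IsPSemigroup op) (hridem : IsIdem op r)
    (hrJ : ∀ A ∈ r, IsJSet op A) (hR : ∀ G, MemPfF op G → R G ∈ r) (s₀ : S) :
    ∀ F, MemPfF op F → GoodAt op r R (build op r R s₀) F := by
  have key : ∀ n : ℕ, ∀ F : Finset (ℕ → S), F.card = n → MemPfF op F →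
      GoodAt op r R (build op r R s₀) F := by
    intro n
    induction n using Nat.strong_induction_on with
    | _ n IHn =>
      intro F hcard hF
      have IH : ∀ G, G ⊂ F → MemPfF op G → GoodAt op r R (build op r R s₀) G := by
        intro G hGF hG
        exact IHn G.card (hcard ▸ Finset.card_lt_card hGF) G rfl hG
      set prevD : Finset (ℕ → S) → PD S :=
        fun G => if hG : G ⊂ F then build op r R s₀ G else defPD s₀ with hprevD
      have IH' : ∀ G, G ⊂ F → MemPfF op G → GoodAt op r R prevD G := by
        intro G hGF hG
        refine GoodAt_congr (fun G' hG' => ?_) (IH G hGF hG)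
        have hG'F : G' ⊂ F := Finset.ssubset_of_subset_of_ssubset hG' hGF
        simp only [hprevD]
        rw [dif_pos hG'F]
      have hEx : ∃ d : PD S, GoodAt op r R (Function.update prevD F d) F :=
        exists_good hps hridem hrJ hR s₀ prevD F hF IH'
      have hbuild : build op r R s₀ F = hEx.choose := by
        rw [build]
        exact dif_pos hEx
      refine GoodAt_congr (fun G hGsub => ?_) hEx.choose_spec
      rcases eq_or_ne G F with rfl | hne
      · rw [Function.update_self, hbuild]
      · have hGF : G ⊂ F := lt_of_le_of_ne hGsub hne
        rw [Function.update_of_ne hne]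
        simp only [hprevD]
        rw [dif_pos hGF]
  exact fun F => key F.card F rfl

end CSTAux


open PSG in
/-- Further generalization of Phulara's Central Sets Theorem for arbitrary adequate partial
semigroups: `r` an idempotent in `J(S)`, `R : P_f(𝓕) → r`. -/
theorem generalized_CST_partial_semigroups {S : Type}
    (op : S → S → Option S)
    (hps : IsPSemigroup op) (hadq : IsAdequate op)
    (r : Ultrafilter S) (hrdelta : InDelta op r) (hrJ : ∀ A ∈ r, IsJSet op A)
    (hridem : IsIdem op r)
    (R : Finset (ℕ → S) → Set S)
    (hR : ∀ F : Finset (ℕ → S), MemPfF op F → R F ∈ r) :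
    ∃ (mstar : Finset (ℕ → S) → ℕ)
      (α : (F : Finset (ℕ → S)) → Fin (mstar F + 1) → S)
      (τ : (F : Finset (ℕ → S)) → Fin (mstar F) → ℕ),
      (∀ F, MemPfF op F → 0 < mstar F ∧ StrictMono (τ F)) ∧
      (∀ F G, MemPfF op F → MemPfF op G → G ⊂ F →
        ∀ (j : Fin (mstar G)) (j' : Fin (mstar F)), τ G j < τ F j') ∧
      (∀ s : ℕ, ∀ hs : 0 < s, ∀ G : Fin s → Finset (ℕ → S),
        (∀ i, MemPfF op (G i)) → (∀ i j : Fin s, i < j → G i ⊂ G j) →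
        ∀ f : Fin s → ℕ → S, (∀ i, f i ∈ G i) →
        ∃ x : S,
          oprodO op (List.ofFn fun i : Fin s =>
            jProd op (α (G i)) (fun j => f i (τ (G i) j))) = some x ∧
          x ∈ R (G ⟨0, hs⟩)) := by
  classical
  have huniv : (Set.univ : Set S).Nonempty :=
    Ultrafilter.nonempty_of_mem (Filter.univ_mem (f := (r : Filter S)))
  obtain ⟨s₀, -⟩ := huniv
  have hBG := CSTAux.build_good hps hridem hrJ hR s₀
  refine ⟨fun F => (CSTAux.build op r R s₀ F).m, fun F => (CSTAux.build op r R s₀ F).a,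
    fun F => (CSTAux.build op r R s₀ F).t, ?_, ?_, ?_⟩
  · exact fun F hF => (hBG F hF).1
  · intro F G hF hG hGF
    exact (hBG F hF).2.1 G hG hGF
  · intro s hs G hGmem hGc f hf
    obtain ⟨x, hx1, hx2⟩ :=
      (hBG (G ⟨s - 1, Nat.sub_lt hs Nat.one_pos⟩) (hGmem _)).2.2 s hs G hGmem hGc rfl f hf
    exact ⟨x, hx1, CSTAux.star_subset op r _ hx2⟩
end

section
/- Let (S,*) be a commutative adequate partial semigroup, let r be an idempotent ultrafilter in J(S), and let R : P_f(𝓕) → r be any function (i.e., R(F) ∈ r for every F ∈ P_f(𝓕)). Then there exist functions γ : P_f(𝓕) → S and H : P_f(𝓕) → P_f(ℕ) such that: (1) if F, G ∈ P_f(𝓕) and G ⊊ F, then max H(G) < min H(F); and (2) if n ∈ ℕ, G_1 ⊊ G_2 ⊊ … ⊊ G_n are members of P_f(𝓕), and f_i ∈ G_i for each i ∈ {1,…,n}, then ∏_{i=1}^{n} (γ(G_i) * ∏_{t∈H(G_i)} f_i(t)) is defined and belongs to R(G_1). -/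
open scoped Classical

namespace PSG

variable {S : Type} {op : S → S → Option S}

theorem oprod_cons_mul (hps : IsPSemigroup op) {a b c : S} (h : op a b = some c)
    (l : List S) : oprod op (c :: l) = oprod op (a :: b :: l) := by
  cases l with
  | nil => simp [oprod, h]
  | cons d l' =>
    show oprod op (c :: d :: l') = _
    rw [oprod, oprod]
    show _ = (oprod op (b :: d :: l')).bind fun x => op a x
    rw [oprod]
    cases hdl : oprod op (d :: l') with
    | none => simp
    | some u =>
      simp only [Option.bind_fun_some, Option.bind_some]
      have := hps a b u
      rw [h] at this
      simpa using this

theorem oprod_perm (hps : IsPSemigroup op) (hcomm : IsComm op) {l l' : List S}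
    (h : l.Perm l') : oprod op l = oprod op l' := by
  induction h with
  | nil => rfl
  | cons x p ih =>
    rename_i l1 l2
    cases l1 with
    | nil => rw [p.nil_eq]
    | cons a t1 =>
      cases l2 with
      | nil => exact absurd p.symm.nil_eq (by simp)
      | cons b t2 => rw [oprod, oprod, ih]
  | swap x y l =>
    cases l with
    | nil =>
      show (oprod op [x]).bind _ = (oprod op [y]).bind _
      simp [oprod, hcomm x y]
    | cons d l' =>
      show (oprod op (x :: d :: l')).bind _ = (oprod op (y :: d :: l')).bind _
      rw [oprod, oprod]
      cases hdl : oprod op (d :: l') with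
      | none => simp
      | some u =>
        simp only [Option.bind_some]
        have h1 := hps y x u
        have h2 := hps x y u
        rw [← h1, hcomm y x, h2]
  | trans p q ih1 ih2 => rw [ih1, ih2]

theorem oprod_congr_cons {l l' : List S} (h : oprod op l = oprod op l')
    (he : l = [] ↔ l' = []) (a : S) : oprod op (a :: l) = oprod op (a :: l') := by
  cases l with
  | nil => rw [he.mp rfl]
  | cons b t =>
    cases l' with
    | nil => simp at he
    | cons c t' => rw [oprod, oprod, h]

theorem oprod_cons_of_ne {l : List S} (h : l ≠ []) (a : S) :
    oprod op (a :: l) = (oprod op l).bind fun x => op a x := by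
  cases l with
  | nil => exact absurd rfl h
  | cons b t => rfl

theorem oprod_append (hps : IsPSemigroup op) :
    ∀ (A B : List S), A ≠ [] → B ≠ [] →
      oprod op (A ++ B) = (oprod op A).bind fun g => (oprod op B).bind fun w => op g w := by
  intro A
  induction A with
  | nil => intro B h; exact absurd rfl h
  | cons a A' ih =>
    intro B _ hB
    cases A' with
    | nil =>
      cases B with
      | nil => exact absurd rfl hB
      | cons b B' => simp [oprod]
    | cons a' A'' =>
      have hne : (a' :: A'') ++ B ≠ [] := by simp
      show oprod op (a :: ((a' :: A'') ++ B)) = _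
      rw [oprod_cons_of_ne hne, ih B (by simp) hB,
        oprod_cons_of_ne (by simp : (a' : S) :: A'' ≠ [])]
      cases hA : oprod op (a' :: A'') with
      | none => simp
      | some u =>
        simp only [Option.bind_some]
        cases hB2 : oprod op B with
        | none => simp
        | some v =>
          simp only [Option.bind_some, Option.bind_some]
          have := hps a u v
          cases hau : op a u with
          | none => rw [hau] at this; simpa using this.symm
          | some w => rw [hau] at this; simpa using this.symm

end PSG
namespace PSG

variable {S : Type} {op : S → S → Option S}

theorem seqO_eq_some {α : Type*} : ∀ {L : List (Option α)} {l : List α},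
    seqO L = some l → L = l.map some := by
  intro L
  induction L with
  | nil => intro l h; simp [seqO] at h; simp [← h]
  | cons x L' ih =>
    intro l h
    simp only [seqO] at h
    cases x with
    | none => simp at h
    | some a =>
      simp only [Option.bind_some] at h
      cases hL : seqO L' with
      | none => rw [hL] at h; simp at h
      | some l' =>
        rw [hL] at h
        simp only [Option.map_some, Option.some.injEq] at h
        subst h
        simp [ih hL]

theorem seqO_map_some {α : Type*} (l : List α) : seqO (l.map some) = some l := by
  induction l with
  | nil => rfl
  | cons a t ih => simp [seqO, ih]

theorem seqO_append {α : Type*} : ∀ (L1 L2 : List (Option α)),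
    seqO (L1 ++ L2) = (seqO L1).bind fun a => (seqO L2).map fun b => a ++ b := by
  intro L1 L2
  induction L1 with
  | nil => simp [seqO]
  | cons x L1' ih =>
    simp only [List.cons_append, seqO]
    cases x with
    | none => simp
    | some a =>
      simp only [Option.bind_some]
      rw [ih]
      cases h1 : seqO L1' with
      | none => simp
      | some l1 =>
        cases h2 : seqO L2 with
        | none => simp
        | some l2 => simp

theorem oprod_append_singleton (hps : IsPSemigroup op) (l : List S) (e : S) (hl : l ≠ []) :
    oprod op (l ++ [e]) = (oprod op l).bind fun y => op y e := by
  rw [oprod_append hps l [e] hl (by simp)]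
  cases oprod op l with
  | none => rfl
  | some u => simp [oprod]

theorem oprodO_map_some (l : List S) : oprodO op (l.map some) = oprod op l := by
  simp [oprodO, seqO_map_some]

theorem oprodO_concat_some (hps : IsPSemigroup op) (L : List (Option S)) (e : S) :
    oprodO op (L ++ [some e]) =
      if L = [] then some e else (oprodO op L).bind fun y => op y e := by
  have h1 : seqO ([some e] : List (Option S)) = some [e] := by simp [seqO]
  rw [oprodO, seqO_append, h1]
  cases hL : seqO L with
  | none =>
    have : L ≠ [] := by rintro rfl; simp [seqO] at hL
    rw [if_neg this]
    simp [oprodO, hL]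
  | some l =>
    simp only [Option.bind_some, Option.map_some, Option.bind_some]
    cases l with
    | nil =>
      have : L = [] := by have := seqO_eq_some hL; simpa using this
      subst this
      simp [oprod]
    | cons c cs =>
      have hLne : L ≠ [] := by
        have := seqO_eq_some hL; subst this; simp
      rw [if_neg hLne, oprodO, hL]
      simp only [Option.bind_some, List.nil_append]
      exact oprod_append_singleton hps (c :: cs) e (by simp)

end PSG
namespace PSG

variable {S : Type} {op : S → S → Option S}

theorem oprod_expand (hps : IsPSemigroup op) (hcomm : IsComm op) :
    ∀ (cs as bs tail : List S) (h1 : as.length = cs.length) (h2 : bs.length = cs.length),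
      (∀ i (hi : i < cs.length), op (as.get ⟨i, by omega⟩) (bs.get ⟨i, by omega⟩)
        = some (cs.get ⟨i, hi⟩)) →
      oprod op (cs ++ tail) = oprod op (as ++ (bs ++ tail)) := by
  intro cs
  induction cs with
  | nil =>
    intro as bs tail h1 h2 _
    have ha : as = [] := List.length_eq_zero_iff.mp (by simpa using h1)
    have hb : bs = [] := List.length_eq_zero_iff.mp (by simpa using h2)
    subst ha hb; rfl
  | cons c cs' ih =>
    intro as bs tail h1 h2 h
    cases as with
    | nil => simp at h1
    | cons a as' =>
      cases bs with
      | nil => simp at h2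
      | cons b bs' =>
        have h0 : op a b = some c := h 0 (by simp)
        have hih := ih as' bs' tail (by simpa using h1) (by simpa using h2)
          (fun i hi => h (i+1) (by simpa using Nat.succ_lt_succ hi))
        have hemp : cs' ++ tail = [] ↔ as' ++ (bs' ++ tail) = [] := by
          constructor
          · intro hh
            simp only [List.append_eq_nil_iff] at hh ⊢
            refine ⟨List.length_eq_zero_iff.mp ?_, List.length_eq_zero_iff.mp ?_, hh.2⟩
            · rw [(by simpa using h1 : as'.length = cs'.length), hh.1]; rfl
            · rw [(by simpa using h2 : bs'.length = cs'.length), hh.1]; rfl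
          · intro hh
            simp only [List.append_eq_nil_iff] at hh ⊢
            refine ⟨List.length_eq_zero_iff.mp ?_, hh.2.2⟩
            rw [(by simpa using h1.symm : cs'.length = as'.length), hh.1]; rfl
        calc oprod op ((c :: cs') ++ tail) = oprod op (c :: (cs' ++ tail)) := rfl
          _ = oprod op (a :: b :: (cs' ++ tail)) := oprod_cons_mul hps h0 _
          _ = oprod op (a :: b :: (as' ++ (bs' ++ tail))) := by
              apply oprod_congr_cons _ (by simp [hemp, not_iff_not]) a
              exact oprod_congr_cons hih hemp b
          _ = oprod op ((a :: as') ++ ((b :: bs') ++ tail)) := by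
              apply oprod_perm hps hcomm
              show List.Perm (a :: b :: (as' ++ (bs' ++ tail))) (a :: (as' ++ (b :: (bs' ++ tail))))
              exact List.Perm.cons a List.perm_middle.symm

theorem jsplit (hps : IsPSemigroup op) (hcomm : IsComm op) {m : ℕ} (hm : 0 < m)
    (a : Fin (m+1) → S) (b : Fin m → S) (x : S) (hx : jProd op a b = some x) :
    ∃ g w, oprod op (List.ofFn a) = some g ∧ oprod op (List.ofFn b) = some w ∧ op g w = some x := by
  rw [jProd, oprodO] at hx
  cases hseq : seqO ((List.ofFn fun j : Fin m => op (a j.castSucc) (b j)) ++ [some (a (Fin.last m))]) with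
  | none => rw [hseq] at hx; simp at hx
  | some l =>
    rw [hseq] at hx
    simp only [Option.bind_some] at hx
    have hLmap := seqO_eq_some hseq
    have hlen : l.length = m + 1 := by
      have := congrArg List.length hLmap
      simpa using this.symm
    obtain ⟨cs, z, hl⟩ : ∃ cs z, l = cs ++ [z] := by
      rcases List.eq_nil_or_concat l with h | ⟨cs, z, h⟩
      · rw [h] at hlen; simp at hlen
      · exact ⟨cs, z, by simpa [List.concat_eq_append] using h⟩
    subst hl
    have hcslen : cs.length = m := by simpa using hlen
    rw [List.map_append] at hLmap
    have hinj := List.append_inj hLmap (by simp [hcslen])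
    have hofn : (List.ofFn fun j : Fin m => op (a j.castSucc) (b j)) = cs.map some := hinj.1
    have hz : z = a (Fin.last m) := by
      have := hinj.2
      simp at this
      exact this.symm
    subst hz
    have hget : ∀ i (hi : i < m),
        op (a (Fin.castSucc ⟨i, hi⟩)) (b ⟨i, hi⟩) = some (cs.get ⟨i, by omega⟩) := by
      intro i hi
      have h3 : i < (List.ofFn fun j : Fin m => op (a j.castSucc) (b j)).length := by
        simpa using hi
      have := List.getElem_of_eq hofn h3
      simp only [List.getElem_ofFn, List.getElem_map] at this
      simpa [List.get_eq_getElem] using this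
    -- expand
    have hexp := oprod_expand hps hcomm cs (List.ofFn fun j : Fin m => a j.castSucc)
      (List.ofFn b) [a (Fin.last m)] (by simp [hcslen]) (by simp [hcslen]) ?_
    · rw [hexp] at hx
      have hperm : List.Perm
          ((List.ofFn fun j : Fin m => a j.castSucc) ++ (List.ofFn b ++ [a (Fin.last m)]))
          (List.ofFn a ++ List.ofFn b) := by
        have h1 : List.Perm (List.ofFn b ++ [a (Fin.last m)])
            (a (Fin.last m) :: List.ofFn b) := by
          simpa using (List.perm_middle (a := a (Fin.last m)) (l₁ := List.ofFn b) (l₂ := []))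
        have h2 : (List.ofFn fun j : Fin m => a j.castSucc) ++ (a (Fin.last m) :: List.ofFn b)
            = List.ofFn a ++ List.ofFn b := by
          rw [List.ofFn_succ' a, List.concat_eq_append]
          simp
        have h3 := List.Perm.append_left (List.ofFn fun j : Fin m => a j.castSucc) h1
        rw [h2] at h3
        exact h3
      rw [oprod_perm hps hcomm hperm] at hx
      rw [oprod_append hps _ _ (by simp) (by
        simp only [ne_eq, List.ofFn_eq_nil_iff]
        omega)] at hx
      cases hg : oprod op (List.ofFn a) with
      | none => rw [hg] at hx; simp at hx
      | some g =>
        rw [hg] at hx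
        simp only [Option.bind_some] at hx
        cases hw : oprod op (List.ofFn b) with
        | none => rw [hw] at hx; simp at hx
        | some w =>
          rw [hw] at hx
          simp only [Option.bind_some] at hx
          exact ⟨g, w, rfl, rfl, hx⟩
    · intro i hi
      have := hget i (by simpa [hcslen] using hi)
      simpa [List.get_ofFn] using this

end PSG
namespace PSG

variable {S : Type} {op : S → S → Option S}

theorem sort_toFinset_eq {l : List ℕ} (h : l.Pairwise (· < ·)) :
    l.toFinset.sort (· ≤ ·) = l :=
  (List.toFinset_sort _ h.nodup).mpr (h.imp le_of_lt)

theorem finProd_ofFn_strictMono (f : ℕ → S) {m : ℕ} (t : Fin m → ℕ) (ht : StrictMono t) :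
    finProd op f (List.ofFn t).toFinset = oprod op (List.ofFn fun j => f (t j)) := by
  rw [finProd, sort_toFinset_eq (List.pairwise_ofFn.mpr fun i j hij => ht hij),
    List.map_ofFn]
  rfl

theorem finProd_shift (f : ℕ → S) (c : ℕ) (H : Finset ℕ) :
    finProd op (fun k => f (k + c)) H = finProd op f (H.image (· + c)) := by
  rw [finProd, finProd]
  have hsort : (H.image (· + c)).sort (· ≤ ·) = (H.sort (· ≤ ·)).map (· + c) := by
    have h1 : ((H.sort (· ≤ ·)).map (· + c)).Pairwise (· < ·) :=
      List.Pairwise.map _ (fun a b hab => by omega) (Finset.sortedLT_sort H).pairwise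
    have h2 : ((H.sort (· ≤ ·)).map (· + c)).toFinset = H.image (· + c) := by
      ext x
      simp [Finset.mem_image, List.mem_map]
    rw [← h2]
    exact sort_toFinset_eq h1
  rw [hsort, List.map_map]
  rfl

theorem shift_adequateSeq {f : ℕ → S} (hf : IsAdequateSeq op f) (c : ℕ) :
    IsAdequateSeq op (fun k => f (k + c)) := by
  constructor
  · intro H hH
    rw [finProd_shift]
    exact hf.1 _ (hH.image _)
  · intro F hF
    obtain ⟨m, hm⟩ := hf.2 F hF
    refine ⟨m, fun H hH hHm x hx => ?_⟩
    rw [finProd_shift] at hx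
    refine hm _ (hH.image _) ?_ x hx
    intro t htm
    simp only [Finset.mem_image] at htm
    obtain ⟨u, hu, rfl⟩ := htm
    have := hHm u hu
    omega

theorem shift_memPfF {F : Finset (ℕ → S)} (hF : MemPfF op F) (c : ℕ) :
    MemPfF op (F.image fun f k => f (k + c)) :=
  ⟨hF.1.image _, fun g hg => by
    obtain ⟨f, hf, rfl⟩ := Finset.mem_image.mp hg
    exact shift_adequateSeq (hF.2 f hf) c⟩

end PSG
namespace PSG

variable {S : Type} {op : S → S → Option S} {r : Ultrafilter S}

/-- the star set of `A` w.r.t. the idempotent `r`. -/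
def starSet (op : S → S → Option S) (r : Ultrafilter S) (A : Set S) : Set S :=
  {x | x ∈ A ∧ sInv op x A ∈ r}

theorem starSet_subset (A : Set S) : starSet op r A ⊆ A := fun _ hx => hx.1

theorem starSet_mem (hridem : IsIdem op r) {A : Set S} (hA : A ∈ r) :
    starSet op r A ∈ r := by
  have h2 : {a : S | sInv op a A ∈ r} ∈ r := (hridem A).mp hA
  exact Filter.inter_mem hA h2

theorem starSet_shift (hps : IsPSemigroup op) (hridem : IsIdem op r) {A : Set S}
    (hA : A ∈ r) {x : S} (hx : x ∈ starSet op r A) : sInv op x (starSet op r A) ∈ r := by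
  obtain ⟨hxA, hxinv⟩ := hx
  have hstar : starSet op r (sInv op x A) ∈ r := starSet_mem hridem hxinv
  refine Filter.mem_of_superset hstar ?_
  rintro t ⟨⟨v, hv, hvA⟩, htinv⟩
  refine ⟨v, hv, hvA, ?_⟩
  refine Filter.mem_of_superset htinv ?_
  rintro s ⟨w, hw, u, hu, huA⟩
  refine ⟨u, ?_, huA⟩
  have h1 := hps x t s
  rw [hv] at h1
  simp only [Option.bind_some] at h1
  rw [h1, hw]
  simpa using hu

end PSG
namespace PSG

variable {S : Type}

/-- the `i`-th entry of a chain product. -/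
def entryE (op : S → S → Option S) (p : S × Finset ℕ) (f : ℕ → S) : Option S :=
  (finProd op f p.2).bind fun w => op p.1 w

/-- the product along a chain. -/
def chainProd (op : S → S → Option S) (val : Finset (ℕ → S) → S × Finset ℕ)
    (n : ℕ) (G : Fin n → Finset (ℕ → S)) (f : Fin n → ℕ → S) : Option S :=
  oprodO op (List.ofFn fun i => entryE op (val (G i)) (f i))

/-- the inductive invariant at `F`. -/
def GoodAt (op : S → S → Option S) (r : Ultrafilter S) (R : Finset (ℕ → S) → Set S)
    (val : Finset (ℕ → S) → S × Finset ℕ) (F : Finset (ℕ → S)) : Prop :=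
  MemPfF op F →
    (val F).2.Nonempty ∧
    (∀ G, MemPfF op G → G ⊂ F → ∀ x ∈ (val G).2, ∀ y ∈ (val F).2, x < y) ∧
    (∀ n : ℕ, ∀ hn : 0 < n, ∀ G : Fin n → Finset (ℕ → S),
      (∀ i, MemPfF op (G i)) → (∀ i j, i < j → G i ⊂ G j) →
      G ⟨n - 1, by omega⟩ = F →
      ∀ f : Fin n → ℕ → S, (∀ i, f i ∈ G i) →
      ∃ x, chainProd op val n G f = some x ∧ x ∈ starSet op r (R (G ⟨0, hn⟩)))

theorem chainProd_congr {op : S → S → Option S} {val val' : Finset (ℕ → S) → S × Finset ℕ}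
    {n : ℕ} {G : Fin n → Finset (ℕ → S)} (h : ∀ i, val (G i) = val' (G i))
    (f : Fin n → ℕ → S) : chainProd op val n G f = chainProd op val' n G f := by
  unfold chainProd
  congr 1
  exact congrArg List.ofFn (funext fun i => by rw [h i])

theorem chain_subset_top {X : Type*} {n : ℕ} (hn : 0 < n) (G : Fin n → Finset X)
    (hchain : ∀ i j : Fin n, i < j → G i ⊂ G j) (i : Fin n) :
    G i ⊆ G ⟨n - 1, by omega⟩ := by
  rcases eq_or_lt_of_le (by omega : i.val ≤ n - 1) with h | h
  · exact le_of_eq (congrArg G (Fin.ext h))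
  · exact (hchain i ⟨n - 1, by omega⟩ h).subset

theorem goodAt_congr {op : S → S → Option S} {r : Ultrafilter S}
    {R : Finset (ℕ → S) → Set S} {val val' : Finset (ℕ → S) → S × Finset ℕ}
    {F : Finset (ℕ → S)} (h : ∀ G, G ⊆ F → val G = val' G)
    (hg : GoodAt op r R val F) : GoodAt op r R val' F := by
  intro hF
  obtain ⟨h1, h2, h3⟩ := hg hF
  refine ⟨by rw [← h F subset_rfl]; exact h1, ?_, ?_⟩
  · intro G hG hGF x hx y hy
    exact h2 G hG hGF x (by rwa [h G hGF.subset]) y (by rwa [h F subset_rfl])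
  · intro n hn G hmem hchain htop f hf
    obtain ⟨x, hx1, hx2⟩ := h3 n hn G hmem hchain htop f hf
    refine ⟨x, ?_, hx2⟩
    rw [← chainProd_congr (fun i => h (G i) ?_) f]
    · exact hx1
    · rw [← htop]; exact chain_subset_top hn G hchain i

theorem chain_card {X : Type*} {n : ℕ} (G : Fin n → Finset X)
    (hne : ∀ i, (G i).Nonempty) (hchain : ∀ i j : Fin n, i < j → G i ⊂ G j) :
    ∀ v (h : v < n), v + 1 ≤ (G ⟨v, h⟩).card := by
  intro v
  induction v with
  | zero => intro h; exact Finset.card_pos.mpr (hne _)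
  | succ w ih =>
    intro h
    have h1 := ih (by omega)
    have h2 : G ⟨w, by omega⟩ ⊂ G ⟨w + 1, h⟩ := hchain _ _ (by simp [Fin.lt_def])
    have := Finset.card_lt_card h2
    omega

theorem oprodO_singleton (op : S → S → Option S) (e : S) : oprodO op [some e] = some e := by
  simp [oprodO, seqO, oprod]

end PSG
namespace PSG

variable {S : Type}

theorem key_step (op : S → S → Option S) (r : Ultrafilter S) (R : Finset (ℕ → S) → Set S)
    (hps : IsPSemigroup op) (hcomm : IsComm op) (hridem : IsIdem op r)
    (hrJ : ∀ A ∈ r, IsJSet op A) (hR : ∀ F, MemPfF op F → R F ∈ r) (s0 : S)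
    (F : Finset (ℕ → S)) (p0 : Finset (ℕ → S) → S × Finset ℕ) :
    ∃ p : S × Finset ℕ,
      MemPfF op F → (∀ G, G ⊂ F → GoodAt op r R p0 G) →
        GoodAt op r R (Function.update p0 F p) F := by
  classical
  by_cases hyp : MemPfF op F ∧ (∀ G, G ⊂ F → GoodAt op r R p0 G)
  swap
  · exact ⟨(s0, {0}), fun h1 h2 => absurd ⟨h1, h2⟩ hyp⟩
  obtain ⟨hF, hprev⟩ := hyp
  set N : ℕ := F.powerset.sup (fun G => (p0 G).2.sup id) with hN
  -- the finite set of (prefix chain product, chain head) data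
  set Y : Finset (Option S × Finset (ℕ → S)) :=
    (Finset.range F.card).biUnion (fun k =>
      Finset.image (fun c : Fin (k + 1) → {q // q ∈ F.powerset ×ˢ F} =>
        (chainProd op p0 (k + 1) (fun i => (c i).1.1) (fun i => (c i).1.2),
          (c ⟨0, Nat.succ_pos k⟩).1.1))
        Finset.univ) with hY
  set T : Option S × Finset (ℕ → S) → Set S := fun q =>
    if h : ∃ y : S, q.1 = some y ∧ y ∈ starSet op r (R q.2) ∧ R q.2 ∈ r
    then sInv op (Classical.choose h) (starSet op r (R q.2)) else Set.univ
    with hT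
  have hTeq : ∀ q (h : ∃ y : S, q.1 = some y ∧ y ∈ starSet op r (R q.2) ∧ R q.2 ∈ r),
      T q = sInv op (Classical.choose h) (starSet op r (R q.2)) := by
    intro q h
    rw [hT]
    exact dif_pos h
  have hTmem : ∀ q, T q ∈ r := by
    intro q
    by_cases h : ∃ y : S, q.1 = some y ∧ y ∈ starSet op r (R q.2) ∧ R q.2 ∈ r
    · rw [hTeq q h]
      obtain ⟨h1, h2, h3⟩ := Classical.choose_spec h
      exact starSet_shift hps hridem h3 h2
    · have : T q = Set.univ := by rw [hT]; exact dif_neg h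
      rw [this]
      exact Filter.univ_mem
  set B : Set S := starSet op r (R F) ∩ ⋂ q ∈ Y, T q with hB
  have hBr : B ∈ r := by
    refine Filter.inter_mem (starSet_mem hridem (hR F hF)) ?_
    exact (Filter.biInter_finset_mem Y).mpr fun q _ => hTmem q
  -- apply the J-set property to the (N+1)-shifted sequences
  obtain ⟨m, hm, a, t, ht, hprod⟩ :=
    hrJ B hBr (F.image fun f k => f (k + (N + 1))) (shift_memPfF hF (N + 1))
      {s0} (Finset.singleton_nonempty s0)
  set t' : Fin m → ℕ := fun j => t j + (N + 1) with ht'def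
  have ht' : StrictMono t' := fun i j hij => by
    have := ht hij; simp only [ht'def]; omega
  set HF : Finset ℕ := (List.ofFn t').toFinset with hHF
  -- for each f ∈ F, the J-set product for the shift of f
  have hxf : ∀ f ∈ F, ∃ x, jProd op a (fun j => f (t' j)) = some x ∧ x ∈ B := by
    intro f hf
    obtain ⟨x, hx1, hx2, _⟩ := hprod _ (Finset.mem_image_of_mem _ hf)
    exact ⟨x, hx1, hx2⟩
  -- the common coefficient γF
  obtain ⟨f0, hf0⟩ := hF.1
  obtain ⟨x0, hx01, hx02⟩ := hxf f0 hf0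
  obtain ⟨g0, w0, hg0, hw0, hgw0⟩ := jsplit hps hcomm hm a _ x0 hx01
  -- key fact: the top entry is defined and lands in B
  have hentry : ∀ f ∈ F, ∃ x, entryE op (g0, HF) f = some x ∧ x ∈ B := by
    intro f hf
    obtain ⟨x, hx1, hx2⟩ := hxf f hf
    obtain ⟨g, w, hg, hw, hgw⟩ := jsplit hps hcomm hm a _ x hx1
    have hgg : g = g0 := by rw [hg] at hg0; exact Option.some_inj.mp hg0
    subst hgg
    refine ⟨x, ?_, hx2⟩
    rw [entryE, hHF, finProd_ofFn_strictMono f t' ht', hw]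
    simpa using hgw
  refine ⟨(g0, HF), fun _ _ => ?_⟩
  intro _
  have hupF : Function.update p0 F (g0, HF) F = (g0, HF) := Function.update_self _ _ _
  have hupG : ∀ G, G ⊂ F → Function.update p0 F (g0, HF) G = p0 G := fun G hG =>
    Function.update_of_ne (Finset.ssubset_iff_subset_ne.mp hG).2 _ _
  have hHFmem : ∀ y ∈ HF, N + 1 ≤ y := by
    intro y hy
    rw [hHF] at hy
    obtain ⟨j, hj⟩ := List.mem_ofFn.mp (List.mem_toFinset.mp hy)
    rw [← hj]; simp only [ht'def]; omega
  refine ⟨?_, ?_, ?_⟩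
  · rw [hupF]
    exact ⟨t' ⟨0, hm⟩, by
      rw [hHF]; exact List.mem_toFinset.mpr (List.mem_ofFn.mpr ⟨_, rfl⟩)⟩
  · intro G hG hGF x hx y hy
    rw [hupG G hGF] at hx
    rw [hupF] at hy
    have h1 : x ≤ (p0 G).2.sup id := Finset.le_sup (f := id) hx
    have h2 : (p0 G).2.sup id ≤ N :=
      Finset.le_sup (f := fun G => (p0 G).2.sup id) (Finset.mem_powerset.mpr hGF.subset)
    have h3 := hHFmem y hy
    omega
  · intro n hn G hmem hchain htop f hf
    obtain ⟨k, rfl⟩ : ∃ k, n = k + 1 := ⟨n - 1, by omega⟩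
    set val := Function.update p0 F (g0, HF) with hval
    have hlast : G (Fin.last k) = F := by
      rw [← htop]; congr 1
    have htopf : f (Fin.last k) ∈ F := by
      rw [← hlast]
      have := hf (Fin.last k)
      convert this using 2
    obtain ⟨xf, hxf1, hxf2⟩ := hentry (f (Fin.last k)) htopf
    have hvaltop : val (G (Fin.last k)) = (g0, HF) := by rw [hlast, hval]; exact hupF
    have hcastlt : ∀ i : Fin k, G i.castSucc ⊂ F := by
      intro i
      rw [← hlast]
      exact hchain _ _ (Fin.castSucc_lt_last i)
    have hlistsplit : (List.ofFn fun i : Fin (k+1) => entryE op (val (G i)) (f i)) =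
        (List.ofFn fun i : Fin k => entryE op (p0 (G i.castSucc)) (f i.castSucc))
          ++ [some xf] := by
      rw [List.ofFn_succ', List.concat_eq_append]
      congr 1
      · exact congrArg List.ofFn (funext fun i => by
          rw [hval, Function.update_of_ne (Finset.ssubset_iff_subset_ne.mp (hcastlt i)).2])
      · rw [hvaltop, hxf1]
    rw [show chainProd op val (k+1) G f =
        oprodO op ((List.ofFn fun i : Fin k =>
          entryE op (p0 (G i.castSucc)) (f i.castSucc)) ++ [some xf]) from by
      rw [chainProd, hlistsplit]]
    rw [oprodO_concat_some hps]
    rcases Nat.eq_zero_or_pos k with hk0 | hk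
    · subst hk0
      rw [if_pos (by simp)]
      refine ⟨xf, rfl, ?_⟩
      have h00 : (⟨0, hn⟩ : Fin 1) = Fin.last 0 := rfl
      rw [h00, hlast]
      exact hxf2.1
    · obtain ⟨k', rfl⟩ : ∃ k', k = k' + 1 := ⟨k - 1, by omega⟩
      rw [if_neg (by simp [List.ofFn_eq_nil_iff])]
      -- the prefix chain
      set G' : Fin (k' + 1) → Finset (ℕ → S) := fun i => G i.castSucc with hG'
      set f' : Fin (k' + 1) → ℕ → S := fun i => f i.castSucc with hf'
      have hprefix : ∃ y, chainProd op p0 (k' + 1) G' f' = some y ∧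
          y ∈ starSet op r (R (G' ⟨0, hk⟩)) := by
        have hsub : G' ⟨k', by omega⟩ ⊂ F := hcastlt _
        have hgood := hprev _ hsub (hmem _)
        exact hgood.2.2 (k' + 1) hk G' (fun i => hmem _)
          (fun i j hij => hchain _ _ (Fin.castSucc_lt_castSucc_iff.mpr hij)) rfl f' (fun i => hf _)
      obtain ⟨y, hy1, hy2⟩ := hprefix
      have hheadeq : G' ⟨0, hk⟩ = G ⟨0, hn⟩ := by
        rw [hG']; congr 1
      set q : Option S × Finset (ℕ → S) := (some y, G ⟨0, hn⟩) with hq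
      have hqY : q ∈ Y := by
        rw [hY]
        refine Finset.mem_biUnion.mpr ⟨k', ?_, ?_⟩
        · refine Finset.mem_range.mpr ?_
          have hidx : k' < k' + 1 := by omega
          have hc1 : k' + 1 ≤ (G' ⟨k', hidx⟩).card := chain_card G' (fun i => (hmem _).1)
            (fun i j hij => hchain _ _ (Fin.castSucc_lt_castSucc_iff.mpr hij)) k' hidx
          have hc2 : (G' ⟨k', hidx⟩).card < F.card :=
            Finset.card_lt_card (hcastlt ⟨k', hidx⟩)
          omega
        · refine Finset.mem_image.mpr ⟨fun i => ⟨(G' i, f' i), ?_⟩, Finset.mem_univ _, ?_⟩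
          · exact Finset.mem_product.mpr ⟨Finset.mem_powerset.mpr (hcastlt i).subset,
              (hcastlt i).subset (hf _)⟩
          · refine Prod.ext ?_ ?_
            · exact hy1
            · exact hheadeq
      have hxfT : xf ∈ T q := by
        have := hxf2.2
        exact Set.mem_iInter₂.mp this q hqY
      have hex : ∃ y' : S, q.1 = some y' ∧ y' ∈ starSet op r (R q.2) ∧ R q.2 ∈ r :=
        ⟨y, rfl, by rw [hheadeq] at hy2; exact hy2, hR _ (hmem ⟨0, hn⟩)⟩
      rw [hTeq q hex] at hxfT
      have hyeq : Classical.choose hex = y := by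
        have h5 : some y = some (Classical.choose hex) := (Classical.choose_spec hex).1
        exact (Option.some_inj.mp h5).symm
      simp only [hyeq] at hxfT
      obtain ⟨z, hz1, hz2⟩ := hxfT
      refine ⟨z, ?_, hz2⟩
      have : oprodO op (List.ofFn fun i : Fin (k' + 1) =>
          entryE op (p0 (G i.castSucc)) (f i.castSucc)) = some y := hy1
      rw [this]
      simpa using hz1

end PSG
namespace PSG

variable {S : Type}

noncomputable def valFn (op : S → S → Option S) (r : Ultrafilter S)
    (R : Finset (ℕ → S) → Set S) (hps : IsPSemigroup op) (hcomm : IsComm op)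
    (hridem : IsIdem op r) (hrJ : ∀ A ∈ r, IsJSet op A)
    (hR : ∀ F, MemPfF op F → R F ∈ r) (s0 : S) (F : Finset (ℕ → S)) : S × Finset ℕ :=
  Classical.choose (key_step op r R hps hcomm hridem hrJ hR s0 F
    (fun G => if h : G ⊂ F then valFn op r R hps hcomm hridem hrJ hR s0 G else (s0, {0})))
termination_by F.card
decreasing_by all_goals exact Finset.card_lt_card h

theorem valFn_good (op : S → S → Option S) (r : Ultrafilter S)
    (R : Finset (ℕ → S) → Set S) (hps : IsPSemigroup op) (hcomm : IsComm op)
    (hridem : IsIdem op r) (hrJ : ∀ A ∈ r, IsJSet op A)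
    (hR : ∀ F, MemPfF op F → R F ∈ r) (s0 : S) :
    ∀ F, GoodAt op r R (valFn op r R hps hcomm hridem hrJ hR s0) F := by
  intro F
  induction F using Finset.strongInduction with
  | _ F ih =>
    set v := valFn op r R hps hcomm hridem hrJ hR s0 with hv
    set prevT : Finset (ℕ → S) → S × Finset ℕ :=
      fun G => if h : G ⊂ F then v G else (s0, {0}) with hprevT
    have hspec := Classical.choose_spec
      (key_step op r R hps hcomm hridem hrJ hR s0 F prevT)
    have hunfold : v F =
        Classical.choose (key_step op r R hps hcomm hridem hrJ hR s0 F prevT) := by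
      rw [hv, valFn]
    have hprevGood : ∀ G, G ⊂ F → GoodAt op r R prevT G := by
      intro G hG
      refine goodAt_congr (fun K hK => ?_) (ih G hG)
      have hKF : K ⊂ F := lt_of_le_of_lt hK hG
      simp only [hprevT]
      rw [dif_pos hKF]
    intro hF
    have h3 := hspec hF hprevGood
    refine goodAt_congr (fun K hK => ?_) h3 hF
    rcases eq_or_ne K F with rfl | hne
    · rw [Function.update_self, ← hunfold]
    · have hKF : K ⊂ F := Finset.ssubset_iff_subset_ne.mpr ⟨hK, hne⟩
      rw [Function.update_of_ne hne]
      simp only [hprevT]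
      exact dif_pos hKF

end PSG



open PSG in
/-- Further generalization of Phulara's Central Sets Theorem for commutative adequate partial
semigroups. -/
theorem generalized_CST_commutative_partial_semigroups {S : Type}
    (op : S → S → Option S)
    (hps : IsPSemigroup op) (hcomm : IsComm op) (hadq : IsAdequate op)
    (r : Ultrafilter S) (hrdelta : InDelta op r) (hrJ : ∀ A ∈ r, IsJSet op A)
    (hridem : IsIdem op r)
    (R : Finset (ℕ → S) → Set S)
    (hR : ∀ F : Finset (ℕ → S), MemPfF op F → R F ∈ r) :
    ∃ (γ : Finset (ℕ → S) → S) (H : Finset (ℕ → S) → Finset ℕ),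
      (∀ F, MemPfF op F → (H F).Nonempty) ∧
      (∀ F G, MemPfF op F → MemPfF op G → G ⊂ F → ∀ x ∈ H G, ∀ y ∈ H F, x < y) ∧
      (∀ n : ℕ, ∀ hn : 0 < n, ∀ G : Fin n → Finset (ℕ → S),
        (∀ i, MemPfF op (G i)) → (∀ i j : Fin n, i < j → G i ⊂ G j) →
        ∀ f : Fin n → ℕ → S, (∀ i, f i ∈ G i) →
        ∃ x : S,
          oprodO op (List.ofFn fun i : Fin n =>
            (finProd op (f i) (H (G i))).bind fun w => op (γ (G i)) w) = some x ∧
          x ∈ R (G ⟨0, hn⟩)) := by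
    classical
  obtain ⟨s0, -⟩ := Ultrafilter.nonempty_of_mem (Filter.univ_mem (f := (r : Filter S)))
  set v := valFn op r R hps hcomm hridem hrJ hR s0 with hv
  have hg := valFn_good op r R hps hcomm hridem hrJ hR s0
  refine ⟨fun F => (v F).1, fun F => (v F).2, ?_, ?_, ?_⟩
  · exact fun F hF => (hg F hF).1
  · exact fun F G hF hG hGF => (hg F hF).2.1 G hG hGF
  · intro n hn G hmem hchain f hf
    obtain ⟨x, hx1, hx2⟩ :=
      (hg (G ⟨n - 1, by omega⟩) (hmem _)).2.2 n hn G hmem hchain rfl f hf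
    exact ⟨x, hx1, hx2.1⟩
end

section
/- Let (S,*) be an adequate partial semigroup and let A be a J-set in S. Let r ∈ ℕ, let F ∈ P_f(𝓕), and let L ∈ P_f(S). Then there exist m ∈ ℕ, a ∈ S^{m+1}, and t ∈ 𝓙_m such that t(1) > r and for all f ∈ F, (∏_{i=1}^{m} a(i) * f(t(i))) * a(m+1) ∈ A ∩ σ(L). -/
open scoped Classical

namespace PSGaux
open PSG

lemma sort_image_add (H : Finset ℕ) (k : ℕ) :
    ((H.image (· + k)).sort (· ≤ ·)) = (H.sort (· ≤ ·)).map (· + k) := by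
  have hinj : Set.InjOn (· + k) ↑H := fun a _ b _ h => by simpa using h
  rw [← Finset.sort_val, ← Finset.sort_val, Finset.image_val_of_injOn hinj,
    ← Multiset.map_sort (r := (· ≤ ·)) (r' := (· ≤ ·)) (f := (· + k)) (s := H.val) (by intro a _ b _; simp)]

lemma finProd_shift {S : Type} (op : S → S → Option S) (f : ℕ → S) (k : ℕ) (H : Finset ℕ) :
    finProd op (fun n => f (n + k)) H = finProd op f (H.image (· + k)) := by
  unfold finProd
  rw [sort_image_add, List.map_map]
  rfl

lemma shift_adequateSeq {S : Type} (op : S → S → Option S) (f : ℕ → S) (k : ℕ)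
    (hf : IsAdequateSeq op f) : IsAdequateSeq op (fun n => f (n + k)) := by
  constructor
  · intro H hH
    rw [finProd_shift]
    exact hf.1 _ (hH.image _)
  · intro F hF
    obtain ⟨m, hm⟩ := hf.2 F hF
    refine ⟨m, fun H hH hHm x hx => ?_⟩
    rw [finProd_shift] at hx
    refine hm _ (hH.image _) ?_ x hx
    intro t ht
    obtain ⟨s, hs, rfl⟩ := Finset.mem_image.1 ht
    exact le_trans (hHm s hs) (Nat.le_add_right s k)

end PSGaux

open PSG in
/-- If `A` is a J-set, the witnesses `t` can be chosen with `t(1) > r`. -/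
theorem jset_large_first_index {S : Type}
    (op : S → S → Option S)
    (hps : IsPSemigroup op) (hadq : IsAdequate op)
    (A : Set S) (hA : IsJSet op A) (r : ℕ)
    (F : Finset (ℕ → S)) (hF : MemPfF op F) (L : Finset S) (hL : L.Nonempty) :
    ∃ m : ℕ, ∃ hm : 0 < m, ∃ (a : Fin (m + 1) → S) (t : Fin m → ℕ),
      StrictMono t ∧ r < t ⟨0, hm⟩ ∧
      ∀ f ∈ F, ∃ x : S, jProd op a (fun j => f (t j)) = some x ∧
        x ∈ A ∧ x ∈ sigmaSet op L := by
  classical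
  set F' : Finset (ℕ → S) := F.image (fun f n => f (n + (r + 1))) with hF'
  have hF'mem : MemPfF op F' := by
    refine ⟨hF.1.image _, fun g hg => ?_⟩
    obtain ⟨f, hf, rfl⟩ := Finset.mem_image.1 hg
    exact PSGaux.shift_adequateSeq op f (r + 1) (hF.2 f hf)
  obtain ⟨m, hm, a, t', ht'mono, ht'⟩ := hA F' hF'mem L hL
  refine ⟨m, hm, a, fun j => t' j + (r + 1), ?_, ?_, ?_⟩
  · intro i j hij
    simpa using ht'mono hij
  · show r < t' ⟨0, hm⟩ + (r + 1); omega
  · intro f hf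
    obtain ⟨x, hx1, hx2⟩ := ht' (fun n => f (n + (r + 1)))
      (Finset.mem_image_of_mem _ hf)
    exact ⟨x, hx1, hx2⟩
end

section
/- Let (S,*) be an adequate partial semigroup, let p ∈ δS be an idempotent (p*p = p), let A ∈ p, and set A* = {x ∈ A : x⁻¹A ∈ p}. Then for every x ∈ A*, x⁻¹(A*) ∈ p. -/
open scoped Classical

open PSG in
/-- For an idempotent `p ∈ δS`, `A ∈ p` and `x ∈ A* = {x ∈ A : x⁻¹A ∈ p}`,
we have `x⁻¹(A*) ∈ p`. -/
theorem star_lemma {S : Type}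
    (op : S → S → Option S) (hps : IsPSemigroup op) (hadq : IsAdequate op)
    (p : Ultrafilter S) (hpdelta : InDelta op p) (hpidem : IsIdem op p)
    (A : Set S) (hA : A ∈ p)
    (x : S) (hx : x ∈ {y ∈ A | sInv op y A ∈ p}) :
    sInv op x {y ∈ A | sInv op y A ∈ p} ∈ p := by
  obtain ⟨hxA, hxinv⟩ := hx
  have hB : {a : S | sInv op a (sInv op x A) ∈ p} ∈ p := (hpidem _).mp hxinv
  have key : sInv op x A ∩ {a : S | sInv op a (sInv op x A) ∈ p}
      ⊆ sInv op x {y ∈ A | sInv op y A ∈ p} := by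
    rintro t ⟨⟨v, hxt, hvA⟩, ht⟩
    refine ⟨v, hxt, hvA, ?_⟩
    refine Filter.mem_of_superset ht ?_
    rintro u ⟨w, htu, z, hxw, hzA⟩
    have := hps x t u
    rw [hxt, htu] at this
    simp only [Option.bind_some] at this
    exact ⟨z, this.trans hxw, hzA⟩
  exact Filter.mem_of_superset (Filter.inter_mem hxinv hB) key
end

section
/- Let (S,*) be an adequate partial semigroup and let A ⊆ S. Then A is syndetic if and only if there exists H ∈ P_f(S) such that δS ⊆ ⋃_{t∈H} cl_{βS}(t⁻¹A). -/
open scoped Classical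

open PSG in
/-- `A` is syndetic iff `δS ⊆ ⋃_{t ∈ H} cl_{βS}(t⁻¹A)` for some `H ∈ P_f(S)`. -/
theorem syndetic_iff {S : Type}
    (op : S → S → Option S) (hps : IsPSemigroup op) (hadq : IsAdequate op)
    (A : Set S) :
    IsSyndetic op A ↔
      ∃ H : Finset S, H.Nonempty ∧
        ∀ p : Ultrafilter S, InDelta op p → ∃ t ∈ H, sInv op t A ∈ p := by
  constructor
  · rintro ⟨H, hHne, hsub⟩
    refine ⟨H, hHne, fun p hp => ?_⟩
    have hsig : sigmaSet op H ∈ p := by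
      have : sigmaSet op H = ⋂ s ∈ H, phiSet op s := by
        ext t; simp [sigmaSet, phiSet]
      rw [this]
      exact (Filter.biInter_mem H.finite_toSet).2 fun s _ => hp s
    have hun : (⋃ t ∈ H, sInv op t A) ∈ p := Filter.mem_of_superset hsig hsub
    exact (Ultrafilter.finite_biUnion_mem_iff H.finite_toSet).1 hun
  · rintro ⟨H, hHne, hp⟩
    by_contra hsyn
    -- the family of generators
    set gen : Set (Set S) :=
      {B | ∃ x : S, B = phiSet op x} ∪ {B | ∃ s ∈ H, B = (sInv op s A)ᶜ} with hgen
    have hFIP : ∀ t ⊆ gen, t.Finite → (⋂₀ t).Nonempty := by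
      intro t hts htf
      have hch : ∀ B : Set S, B ∈ t →
          ∃ x : S, B = phiSet op x ∨ (x ∈ H ∧ B = (sInv op x A)ᶜ) := by
        intro B hB
        rcases hts hB with ⟨x, hx⟩ | ⟨s, hs, hsB⟩
        · exact ⟨x, Or.inl hx⟩
        · exact ⟨s, Or.inr ⟨hs, hsB⟩⟩
      classical
      obtain ⟨g, hg⟩ : ∃ g : Set S → S, ∀ B ∈ t,
          B = phiSet op (g B) ∨ (g B ∈ H ∧ B = (sInv op (g B) A)ᶜ) := by
        refine ⟨fun B => if h : B ∈ t then (hch B h).choose else hHne.choose, ?_⟩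
        intro B hB
        simp only [dif_pos hB]
        exact (hch B hB).choose_spec
      set H' : Finset S := H ∪ htf.toFinset.image g with hH'
      have hH'ne : H'.Nonempty := Finset.Nonempty.mono Finset.subset_union_left hHne
      have hnot : ¬ sigmaSet op H' ⊆ ⋃ s ∈ H', sInv op s A := by
        intro hc
        exact hsyn ⟨H', hH'ne, hc⟩
      obtain ⟨y, hy1, hy2⟩ := Set.not_subset.1 hnot
      refine ⟨y, ?_⟩
      rintro B hB
      rcases hg B hB with hBphi | ⟨hgH, hBc⟩
      · rw [hBphi]
        exact hy1 (g B) (Finset.mem_union_right _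
          (Finset.mem_image.2 ⟨B, htf.mem_toFinset.2 hB, rfl⟩))
      · rw [hBc]
        intro hyB
        exact hy2 (Set.mem_biUnion (Finset.mem_union_left _ hgH) hyB)
    have hne : (Filter.generate gen).NeBot := Filter.generate_neBot_iff.2 hFIP
    set p := Ultrafilter.of (Filter.generate gen)
    have hple : (p : Filter S) ≤ Filter.generate gen := Ultrafilter.of_le _
    have hmem : ∀ B ∈ gen, B ∈ p := fun B hB =>
      hple (Filter.mem_generate_of_mem hB)
    have hdel : InDelta op p := fun x => hmem _ (Or.inl ⟨x, rfl⟩)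
    obtain ⟨s, hsH, hsp⟩ := hp p hdel
    have : (sInv op s A)ᶜ ∈ p := hmem _ (Or.inr ⟨s, hsH, rfl⟩)
    exact absurd hsp (Ultrafilter.compl_mem_iff_notMem.1 this)
end

section
/- Let (S,*) be an adequate partial semigroup and let A ⊆ S be piecewise syndetic. Then there exists H ∈ P_f(S) such that for every nonempty finite set T ⊆ σ(H), there exists x ∈ σ(T) such that T*x := {t*x : t ∈ T} ⊆ ⋃_{t∈H} t⁻¹A. -/
open scoped Classical

namespace PWSAux
open PSG

variable {S : Type} {op : S → S → Option S}
  {mul : Ultrafilter S → Ultrafilter S → Ultrafilter S}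

/-- If `(a*b)*c` is defined then so is `b*c` and `a*(b*c)`, with equality. -/
lemma assoc_some_left (hps : IsPSemigroup op) {a b c ab w : S}
    (h1 : op a b = some ab) (h2 : op ab c = some w) :
    ∃ bc, op b c = some bc ∧ op a bc = some w := by
  have h := hps a b c
  rw [h1] at h
  simp only [Option.bind_some] at h
  rw [h2] at h
  cases hbc : op b c with
  | none => rw [hbc] at h; simp at h
  | some bc =>
      rw [hbc] at h
      simp only [Option.bind_some] at h
      exact ⟨bc, rfl, h.symm⟩

/-- If `a*(b*c)` is defined then so is `a*b` and `(a*b)*c`, with equality. -/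
lemma assoc_some_right (hps : IsPSemigroup op) {a b c bc w : S}
    (h1 : op b c = some bc) (h2 : op a bc = some w) :
    ∃ ab, op a b = some ab ∧ op ab c = some w := by
  have h := hps a b c
  rw [h1] at h
  simp only [Option.bind_some] at h
  rw [h2] at h
  cases hab : op a b with
  | none => rw [hab] at h; simp at h
  | some ab =>
      rw [hab] at h
      simp only [Option.bind_some] at h
      exact ⟨ab, rfl, h⟩

/-- `c⁻¹(b⁻¹A) = (b*c)⁻¹A` when `b*c` is defined. -/
lemma sInv_comp (hps : IsPSemigroup op) {b c v : S} (h : op b c = some v) (A : Set S) :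
    sInv op c (sInv op b A) = sInv op v A := by
  ext t
  constructor
  · rintro ⟨y, hct, w, hby, hw⟩
    obtain ⟨ab, hab, habt⟩ := assoc_some_right hps hct hby
    rw [h] at hab
    have hve : v = ab := by injection hab
    subst hve
    exact ⟨w, habt, hw⟩
  · rintro ⟨w, hvt, hw⟩
    obtain ⟨y, hct, hby⟩ := assoc_some_left hps h hvt
    exact ⟨y, hct, w, hby, hw⟩

/-- The key set identity behind associativity of the ultrafilter product. -/
lemma sInv_setOf (hps : IsPSemigroup op) (r : Ultrafilter S) (b : S) (A : Set S) :
    sInv op b {a | sInv op a A ∈ r} = {c | sInv op c (sInv op b A) ∈ r} := by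
  ext c
  constructor
  · rintro ⟨v, hbc, hv⟩
    show sInv op c (sInv op b A) ∈ r
    rw [sInv_comp hps hbc]
    exact hv
  · intro hc
    have hc' : sInv op c (sInv op b A) ∈ r := hc
    obtain ⟨t, y, hct, w, hby, -⟩ := Ultrafilter.nonempty_of_mem hc'
    obtain ⟨v, hbc, -⟩ := assoc_some_right hps hct hby
    refine ⟨v, hbc, ?_⟩
    show sInv op v A ∈ r
    rwa [sInv_comp hps hbc] at hc'

lemma mem_mul (hmul : MulCompat op mul) {p q : Ultrafilter S} (hq : InDelta op q)
    {A : Set S} : A ∈ mul p q ↔ {a | sInv op a A ∈ q} ∈ p :=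
  hmul p q hq A

lemma sInv_phiSet_superset (hps : IsPSemigroup op) {x a v : S} (h : op x a = some v) :
    phiSet op v ∩ phiSet op a ⊆ sInv op a (phiSet op x) := by
  rintro t ⟨hv, ha⟩
  obtain ⟨w, hvt⟩ := Option.isSome_iff_exists.mp hv
  obtain ⟨y, hat, hxy⟩ := assoc_some_left hps h hvt
  exact ⟨y, hat, Option.isSome_iff_exists.mpr ⟨w, hxy⟩⟩

/-- `δS` is closed under the product. -/
lemma inDelta_mul (hps : IsPSemigroup op) (hmul : MulCompat op mul)
    {p q : Ultrafilter S} (hp : InDelta op p) (hq : InDelta op q) :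
    InDelta op (mul p q) := by
  intro x
  rw [mem_mul hmul hq]
  refine Filter.mem_of_superset (hp x) fun a ha => ?_
  obtain ⟨v, hxa⟩ := Option.isSome_iff_exists.mp ha
  exact Filter.mem_of_superset (Filter.inter_mem (hq v) (hq a)) (sInv_phiSet_superset hps hxa)

/-- Associativity of the product with second and third factors in `δS`. -/
lemma mul_assoc3 (hps : IsPSemigroup op) (hmul : MulCompat op mul)
    {u v w : Ultrafilter S} (hv : InDelta op v) (hw : InDelta op w) :
    mul (mul u v) w = mul u (mul v w) := by
  have hvw : InDelta op (mul v w) := inDelta_mul hps hmul hv hw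
  apply Ultrafilter.ext
  intro A
  rw [mem_mul hmul hw, mem_mul hmul hv, mem_mul hmul hvw]
  have hset : {b | sInv op b {a | sInv op a A ∈ w} ∈ v}
      = {b | sInv op b A ∈ mul v w} := by
    ext b
    simp only [Set.mem_setOf_eq]
    rw [mem_mul hmul hw]
    show sInv op b {a | sInv op a A ∈ w} ∈ v ↔ _
    rw [sInv_setOf hps w b A]
  rw [hset]

/-- `δS` as a set of ultrafilters. -/
def Delta (op : S → S → Option S) : Set (Ultrafilter S) := {u | InDelta op u}

lemma isClosed_delta : IsClosed (Delta op) := by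
  have h : Delta op = ⋂ x : S, {u : Ultrafilter S | phiSet op x ∈ u} := by
    ext u; simp [Delta, InDelta, Set.mem_iInter]
  rw [h]
  exact isClosed_iInter fun x => ultrafilter_isClosed_basic _

lemma delta_nonempty (hadq : IsAdequate op) (hS : Nonempty S) : (Delta op).Nonempty := by
  set g : Set (Set S) := Set.range (phiSet op) with hg
  have hne : Filter.NeBot (Filter.generate g) := by
    refine ⟨fun hbot => ?_⟩
    have h0 : (∅ : Set S) ∈ Filter.generate g := by rw [hbot]; exact Filter.mem_bot
    obtain ⟨t, htg, htf, hts⟩ := Filter.mem_generate_iff.mp h0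
    have hchoice : ∀ s ∈ t, ∃ x : S, phiSet op x = s := fun s hs => htg hs
    classical
    set H : Finset S := htf.toFinset.biUnion fun s =>
      if h : ∃ x : S, phiSet op x = s then {h.choose} else ∅ with hH
    obtain ⟨y, hy⟩ : (sigmaSet op H).Nonempty := by
      rcases H.eq_empty_or_nonempty with h | h
      · exact ⟨hS.some, by simp [sigmaSet, h]⟩
      · exact hadq H h
    have hyt : y ∈ ⋂₀ t := by
      refine Set.mem_sInter.mpr fun s hs => ?_
      obtain ⟨x, hx⟩ := hchoice s hs
      have hxH : (hchoice s hs).choose ∈ H := by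
        rw [hH]
        refine Finset.mem_biUnion.mpr ⟨s, htf.mem_toFinset.mpr hs, ?_⟩
        rw [dif_pos (hchoice s hs)]
        exact Finset.mem_singleton_self _
      have := hy _ hxH
      have hspec := (hchoice s hs).choose_spec
      rw [← hspec]
      exact this
    exact (hts hyt).elim
  obtain ⟨u, hu⟩ := Ultrafilter.exists_le (Filter.generate g)
  exact ⟨u, fun x => hu (Filter.mem_generate_of_mem ⟨x, rfl⟩)⟩

lemma continuous_mul_right (hmul : MulCompat op mul) {v : Ultrafilter S}
    (hv : InDelta op v) : Continuous fun u : Ultrafilter S => mul u v := by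
  rw [ultrafilterBasis_is_basis.continuous_iff]
  rintro s ⟨A, rfl⟩
  have h : (fun u : Ultrafilter S => mul u v) ⁻¹' {w | A ∈ w}
      = {u : Ultrafilter S | {a | sInv op a A ∈ v} ∈ u} := by
    ext u
    exact mem_mul hmul hv
  rw [h]
  exact ultrafilter_isOpen_basic _

/-- closed left ideals of `δS`. -/
def LIdeals (op : S → S → Option S)
    (mul : Ultrafilter S → Ultrafilter S → Ultrafilter S) : Set (Set (Ultrafilter S)) :=
  {L | L.Nonempty ∧ L ⊆ Delta op ∧ IsClosed L ∧
    ∀ u ∈ Delta op, ∀ x ∈ L, mul u x ∈ L}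

lemma image_mul_mem_LIdeals (hps : IsPSemigroup op) (hmul : MulCompat op mul)
    {L : Set (Ultrafilter S)} (hL : L ∈ LIdeals op mul) {x : Ultrafilter S}
    (hx : x ∈ Delta op) : (fun u => mul u x) '' L ∈ LIdeals op mul := by
  obtain ⟨hLne, hLd, hLc, hLi⟩ := hL
  refine ⟨hLne.image _, ?_, ?_, ?_⟩
  · rintro - ⟨u, hu, rfl⟩
    exact inDelta_mul hps hmul (hLd hu) hx
  · exact (hLc.isCompact.image (continuous_mul_right hmul hx)).isClosed
  · rintro u hu - ⟨w, hw, rfl⟩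
    refine ⟨mul u w, hLi u hu w hw, ?_⟩
    show mul (mul u w) x = mul u (mul w x)
    exact mul_assoc3 hps hmul (hLd hw) hx

lemma exists_minimal_LIdeal (hps : IsPSemigroup op) (hmul : MulCompat op mul)
    (hadq : IsAdequate op) (hS : Nonempty S) :
    ∃ L, Minimal (· ∈ LIdeals op mul) L := by
  have hchaincond : ∀ c ⊆ LIdeals op mul, IsChain (· ⊆ ·) c → c.Nonempty →
      ∃ lb ∈ LIdeals op mul, ∀ s ∈ c, lb ⊆ s := by
    intro c hc hchain hcne
    refine ⟨⋂₀ c, ⟨?_, ?_, ?_, ?_⟩, fun s hs => Set.sInter_subset_of_mem hs⟩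
    · rw [Set.sInter_eq_iInter]
      have : Nonempty c := hcne.to_subtype
      refine IsCompact.nonempty_iInter_of_directed_nonempty_isCompact_isClosed
        (fun i : c => (i : Set (Ultrafilter S))) ?_ (fun i => (hc i.2).1)
        (fun i => (hc i.2).2.2.1.isCompact) (fun i => (hc i.2).2.2.1)
      rintro i j
      rcases hchain.total i.2 j.2 with h | h
      · exact ⟨i, le_refl _, h⟩
      · exact ⟨j, h, le_refl _⟩
    · obtain ⟨s, hs⟩ := hcne
      exact (Set.sInter_subset_of_mem hs).trans (hc hs).2.1
    · exact isClosed_sInter fun s hs => (hc hs).2.2.1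
    · intro u hu x hx
      exact Set.mem_sInter.mpr fun s hs =>
        (hc hs).2.2.2 u hu x (Set.mem_sInter.mp hx s hs)
  obtain ⟨L, -, hL⟩ := zorn_superset_nonempty (LIdeals op mul) hchaincond (Delta op)
    ⟨delta_nonempty hadq hS, le_refl _, isClosed_delta,
      fun u hu x hx => inDelta_mul hps hmul hu hx⟩
  exact ⟨L, hL⟩

/-- the union of the minimal closed left ideals. -/
def K0 (op : S → S → Option S)
    (mul : Ultrafilter S → Ultrafilter S → Ultrafilter S) : Set (Ultrafilter S) :=
  {u | ∃ L, Minimal (· ∈ LIdeals op mul) L ∧ u ∈ L}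

lemma K0_isIdeal (hps : IsPSemigroup op) (hmul : MulCompat op mul)
    (hadq : IsAdequate op) (hS : Nonempty S) : IsIdealK op mul (K0 op mul) := by
  obtain ⟨L0, hL0⟩ := exists_minimal_LIdeal hps hmul hadq hS
  refine ⟨?_, ?_, ?_, ?_⟩
  · obtain ⟨u, hu⟩ := hL0.1.1
    exact ⟨u, L0, hL0, hu⟩
  · rintro p ⟨L, hLmin, hpL⟩
    exact hLmin.1.2.1 hpL
  · rintro p hp q ⟨L, hLmin, hqL⟩
    exact ⟨L, hLmin, hLmin.1.2.2.2 p hp q hqL⟩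
  · rintro q ⟨L, hLmin, hqL⟩ p hp
    -- `L*p` is a minimal closed left ideal containing `q*p`.
    refine ⟨(fun u => mul u p) '' L, ⟨image_mul_mem_LIdeals hps hmul hLmin.1 hp, ?_⟩,
      ⟨q, hqL, rfl⟩⟩
    intro L' hL' hsub
    obtain ⟨v', hv'⟩ := hL'.1
    obtain ⟨w0, hw0L, hw0⟩ := hsub hv'
    set M : Set (Ultrafilter S) := L ∩ (fun u => mul u p) ⁻¹' L' with hM
    have hML : M ∈ LIdeals op mul := by
      have hw0M : w0 ∈ M := by
        refine ⟨hw0L, ?_⟩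
        show mul w0 p ∈ L'
        rw [show mul w0 p = v' from hw0]
        exact hv'
      refine ⟨⟨w0, hw0M⟩, fun u hu => hLmin.1.2.1 hu.1,
        hLmin.1.2.2.1.inter ((hL'.2.2.1).preimage (continuous_mul_right hmul hp)), ?_⟩
      rintro u hu x ⟨hxL, hxL'⟩
      refine ⟨hLmin.1.2.2.2 u hu x hxL, ?_⟩
      show mul (mul u x) p ∈ L'
      rw [mul_assoc3 hps hmul (hLmin.1.2.1 hxL) hp]
      exact hL'.2.2.2 u hu _ hxL'
    have hMeq : L ⊆ M := hLmin.2 hML Set.inter_subset_left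
    rintro - ⟨w, hwL, rfl⟩
    exact (hMeq hwL).2

end PWSAux

open PSG in
/-- If `A` is piecewise syndetic there is `H ∈ P_f(S)` such that every finite nonempty
`T ⊆ σ(H)` admits `x ∈ σ(T)` with `T*x ⊆ ⋃_{t ∈ H} t⁻¹A`. -/
theorem piecewise_syndetic_lemma {S : Type}
    (op : S → S → Option S) (hps : IsPSemigroup op) (hadq : IsAdequate op)
    (mul : Ultrafilter S → Ultrafilter S → Ultrafilter S) (hmul : MulCompat op mul)
    (A : Set S) (hA : IsPWSyndetic op mul A) :
    ∃ H : Finset S, H.Nonempty ∧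
      ∀ T : Finset S, T.Nonempty → ↑T ⊆ sigmaSet op H →
        ∃ x ∈ sigmaSet op T, ∀ t ∈ T, ∃ v : S, op t x = some v ∧
          v ∈ ⋃ u ∈ H, sInv op u A := by
  classical
  obtain ⟨p, hAp, hpK⟩ := hA
  have hS : Nonempty S := Filter.nonempty_of_neBot (p : Filter S)
  have hK0 : IsIdealK op mul (PWSAux.K0 op mul) := PWSAux.K0_isIdeal hps hmul hadq hS
  have hpK0 : p ∈ PWSAux.K0 op mul := hpK _ hK0
  obtain ⟨L, hLmin, hpL⟩ := hpK0
  have hpd : InDelta op p := hLmin.1.2.1 hpL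
  -- the sets `D a`
  set D : S → Set S := fun a => {b | sInv op b (sInv op a A) ∈ p} with hD
  -- every ultrafilter in `δS` contains some `D a`
  have key : ∀ q : Ultrafilter S, InDelta op q → ∃ a : S, D a ∈ q := by
    intro q hq
    set z : Ultrafilter S := mul q p with hz
    have hzL : z ∈ L := hLmin.1.2.2.2 q hq p hpL
    have hzd : InDelta op z := hLmin.1.2.1 hzL
    have hLz : (fun u => mul u z) '' PWSAux.Delta op ∈ PWSAux.LIdeals op mul := by
      refine PWSAux.image_mul_mem_LIdeals hps hmul ?_ hzd
      exact ⟨PWSAux.delta_nonempty hadq hS, le_refl _, PWSAux.isClosed_delta,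
        fun u hu x hx => PWSAux.inDelta_mul hps hmul hu hx⟩
    have hsub : (fun u => mul u z) '' PWSAux.Delta op ⊆ L := by
      rintro - ⟨u, hu, rfl⟩
      exact hLmin.1.2.2.2 u hu z hzL
    have hpLz : p ∈ (fun u => mul u z) '' PWSAux.Delta op := hLmin.2 hLz hsub hpL
    obtain ⟨r, -, hrz⟩ := hpLz
    have hAz : {a | sInv op a A ∈ z} ∈ r := by
      rw [← PWSAux.mem_mul hmul hzd]
      have heq : mul r z = p := hrz
      rw [heq]
      exact hAp
    obtain ⟨a, ha⟩ := Ultrafilter.nonempty_of_mem hAz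
    refine ⟨a, ?_⟩
    have := (PWSAux.mem_mul hmul hpd).mp ha
    exact this
  -- compactness: finitely many `D a` cover some `σ(H₀)`
  set g : Set (Set S) := Set.range (phiSet op) ∪ {s | ∃ a : S, s = (D a)ᶜ} with hg
  have hbot : Filter.generate g = ⊥ := by
    by_contra hne
    obtain ⟨u, hu⟩ := Ultrafilter.exists_le (f := Filter.generate g) (h := ⟨hne⟩)
    have hud : InDelta op u := fun x =>
      hu (Filter.mem_generate_of_mem (Or.inl ⟨x, rfl⟩))
    obtain ⟨a, haD⟩ := key u hud
    have : (D a)ᶜ ∈ u := hu (Filter.mem_generate_of_mem (Or.inr ⟨a, rfl⟩))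
    exact (Ultrafilter.compl_mem_iff_notMem.mp this) haD
  have h0 : (∅ : Set S) ∈ Filter.generate g := by rw [hbot]; exact Filter.mem_bot
  obtain ⟨t, htg, htf, hts⟩ := Filter.mem_generate_iff.mp h0
  -- extract the finite sets H₀ and G
  set H0 : Finset S := htf.toFinset.biUnion fun s =>
    if h : ∃ x : S, phiSet op x = s then {h.choose} else ∅ with hH0
  set G : Finset S := htf.toFinset.biUnion fun s =>
    if h : ∃ a : S, s = (D a)ᶜ then {h.choose} else ∅ with hG
  have hcover : ∀ y ∈ sigmaSet op H0, ∃ a ∈ G, y ∈ D a := by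
    intro y hy
    by_contra hnone
    push_neg at hnone
    have hyt : y ∈ ⋂₀ t := by
      refine Set.mem_sInter.mpr fun s hs => ?_
      rcases htg hs with ⟨x, hx⟩ | ⟨a, ha⟩
      · have hex : ∃ x : S, phiSet op x = s := ⟨x, hx⟩
        have hxH : hex.choose ∈ H0 := by
          rw [hH0]
          refine Finset.mem_biUnion.mpr ⟨s, htf.mem_toFinset.mpr hs, ?_⟩
          rw [dif_pos hex]
          exact Finset.mem_singleton_self _
        have := hy _ hxH
        rw [← hex.choose_spec]
        exact this
      · have hex : ∃ a : S, s = (D a)ᶜ := ⟨a, ha⟩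
        have haG : hex.choose ∈ G := by
          rw [hG]
          refine Finset.mem_biUnion.mpr ⟨s, htf.mem_toFinset.mpr hs, ?_⟩
          rw [dif_pos hex]
          exact Finset.mem_singleton_self _
        rw [hex.choose_spec]
        exact hnone _ haG
    exact (hts hyt).elim
  -- G is nonempty
  have hGne : G.Nonempty := by
    obtain ⟨y, hy⟩ : (sigmaSet op H0).Nonempty := by
      rcases H0.eq_empty_or_nonempty with h | h
      · exact ⟨hS.some, by simp [sigmaSet, h]⟩
      · exact hadq H0 h
    obtain ⟨a, haG, -⟩ := hcover y hy
    exact ⟨a, haG⟩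
  refine ⟨H0 ∪ G, hGne.mono Finset.subset_union_right, ?_⟩
  intro T hT hTsub
  -- choose for each t ∈ T a suitable a ∈ G
  have hchoice : ∀ τ ∈ T, ∃ a ∈ G, sInv op τ (sInv op a A) ∈ p := by
    intro τ hτ
    have hτσ : τ ∈ sigmaSet op H0 := by
      intro s hs
      exact hTsub hτ s (Finset.mem_union_left _ hs)
    obtain ⟨a, haG, haD⟩ := hcover τ hτσ
    exact ⟨a, haG, haD⟩
  set f : S → S := fun τ => if h : ∃ a ∈ G, sInv op τ (sInv op a A) ∈ p
    then h.choose else hS.some with hf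
  have hfspec : ∀ τ ∈ T, f τ ∈ G ∧ sInv op τ (sInv op (f τ) A) ∈ p := by
    intro τ hτ
    have h := hchoice τ hτ
    rw [hf]
    simp only [dif_pos h]
    exact ⟨h.choose_spec.1, h.choose_spec.2⟩
  have hC : (⋂ τ ∈ T, sInv op τ (sInv op (f τ) A)) ∈ p :=
    (Filter.biInter_finset_mem T).mpr fun τ hτ => (hfspec τ hτ).2
  obtain ⟨x, hx⟩ := Ultrafilter.nonempty_of_mem hC
  have hxmem : ∀ τ ∈ T, x ∈ sInv op τ (sInv op (f τ) A) := by
    intro τ hτ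
    exact Set.mem_iInter₂.mp hx τ hτ
  refine ⟨x, ?_, ?_⟩
  · intro τ hτ
    obtain ⟨v, hv, -⟩ := hxmem τ hτ
    exact Option.isSome_iff_exists.mpr ⟨v, hv⟩
  · intro τ hτ
    obtain ⟨v, hv, hvA⟩ := hxmem τ hτ
    refine ⟨v, hv, ?_⟩
    exact Set.mem_biUnion (Finset.mem_union_right _ (hfspec τ hτ).1) hvA
end

section
/- Let (S,+) be a commutative adequate partial semigroup and let 𝓐 be a shift-invariant, adequately partition regular family of finite subsets of S. Let E ⊆ S be piecewise syndetic. Then E contains a member of 𝓐. -/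
open scoped Classical

open PSG

private lemma fip_core {S : Type} (op : S → S → Option S)
    (𝓐 : Set (Set S)) (hpr : AdequatelyPR op 𝓐) (h₀ : ∅ ∉ 𝓐)
    (H : Finset S) (hH : H.Nonempty) (T : Finset (Set S))
    (hT : ∀ A ∈ T, ¬ ∃ A₀ ∈ 𝓐, A₀ ⊆ A) :
    ∃ s, s ∈ sigmaSet op H ∧ ∀ A ∈ T, s ∉ A := by
  classical
  set L := T.toList with hLdef
  obtain ⟨F, hFσ, hcov⟩ := hpr H hH (L.length + 1) (Nat.succ_pos _)
  set C : Fin (L.length + 1) → Set S :=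
    fun j => Fin.lastCases (sigmaSet op H \ ⋃₀ ↑T) (fun i => L.get i) j with hCdef
  have hFC : (↑F : Set S) ⊆ ⋃ j, C j := by
    intro x hx
    by_cases hxT : ∃ A ∈ T, x ∈ A
    · obtain ⟨A, hAT, hxA⟩ := hxT
      obtain ⟨i, hi⟩ := List.mem_iff_get.mp (Finset.mem_toList.mpr hAT)
      refine Set.mem_iUnion.mpr ⟨i.castSucc, ?_⟩
      simp only [hCdef, Fin.lastCases_castSucc]
      exact hi ▸ hxA
    · refine Set.mem_iUnion.mpr ⟨Fin.last _, ?_⟩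
      simp only [hCdef, Fin.lastCases_last]
      refine ⟨hFσ hx, ?_⟩
      intro hmem
      obtain ⟨A, hAT, hxA⟩ := Set.mem_sUnion.mp hmem
      exact hxT ⟨A, hAT, hxA⟩
  obtain ⟨j, A₀, hA₀, hsub⟩ := hcov C hFC
  induction j using Fin.lastCases with
  | last =>
    simp only [hCdef, Fin.lastCases_last] at hsub
    have hA₀ne : A₀.Nonempty := by
      rcases Set.eq_empty_or_nonempty A₀ with rfl | h
      · exact absurd hA₀ h₀
      · exact h
    obtain ⟨s, hs⟩ := hA₀ne
    have := hsub hs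
    refine ⟨s, this.1, ?_⟩
    intro A hAT hsA
    exact this.2 (Set.mem_sUnion.mpr ⟨A, hAT, hsA⟩)
  | cast i =>
    simp only [hCdef, Fin.lastCases_castSucc] at hsub
    exact absurd ⟨A₀, hA₀, hsub⟩ (hT _ (Finset.mem_toList.mp (L.get_mem i)))

private lemma exists_good {S : Type} [Nonempty S] (op : S → S → Option S)
    (𝓐 : Set (Set S)) (hpr : AdequatelyPR op 𝓐) (h₀ : ∅ ∉ 𝓐) :
    ∃ u : Ultrafilter S, InDelta op u ∧ ∀ A ∈ u, ∃ A₀ ∈ 𝓐, A₀ ⊆ A := by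
  classical
  obtain ⟨s₀⟩ := ‹Nonempty S›
  set 𝒢 : Set (Set S) :=
    Set.range (phiSet op) ∪ {B | ∃ A, (¬ ∃ A₀ ∈ 𝓐, A₀ ⊆ A) ∧ B = Aᶜ} with h𝒢
  have hne : (Filter.generate 𝒢).NeBot := by
    rw [Filter.generate_neBot_iff]
    intro t hts htf
    set pick : Set S → S := fun B => if h : ∃ x, phiSet op x = B then h.choose else s₀
      with hpick
    set H : Finset S :=
      insert s₀ ((htf.toFinset.filter fun B => ∃ x, phiSet op x = B).image pick) with hH
    set T : Finset (Set S) :=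
      (htf.toFinset.filter fun B => ¬ ∃ x, phiSet op x = B).image compl with hTdef
    have hTbad : ∀ A ∈ T, ¬ ∃ A₀ ∈ 𝓐, A₀ ⊆ A := by
      intro A hA
      simp only [hTdef, Finset.mem_image, Finset.mem_filter] at hA
      obtain ⟨B, ⟨hBt, hBnφ⟩, rfl⟩ := hA
      have hBt' : B ∈ t := htf.mem_toFinset.mp hBt
      rcases hts hBt' with hφ | hbad
      · obtain ⟨x, hx⟩ := hφ
        exact absurd ⟨x, hx⟩ hBnφ
      · obtain ⟨A, hA, rfl⟩ := hbad
        rw [compl_compl]; exact hA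
    obtain ⟨s, hsσ, hsT⟩ := fip_core op 𝓐 hpr h₀ H ⟨s₀, by simp [hH]⟩ T hTbad
    refine ⟨s, Set.mem_sInter.mpr ?_⟩
    intro B hBt
    by_cases hφ : ∃ x, phiSet op x = B
    · have hxH : pick B ∈ H := by
        rw [hH]
        exact Finset.mem_insert_of_mem (Finset.mem_image_of_mem _
          (Finset.mem_filter.mpr ⟨htf.mem_toFinset.mpr hBt, hφ⟩))
      have hpb : phiSet op (pick B) = B := by
        rw [hpick]; simp only [dif_pos hφ]; exact hφ.choose_spec
      have := hsσ (pick B) hxH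
      rw [← hpb]; exact this
    · have hBc : Bᶜ ∈ T := by
        rw [hTdef]
        exact Finset.mem_image_of_mem _
          (Finset.mem_filter.mpr ⟨htf.mem_toFinset.mpr hBt, hφ⟩)
      have := hsT _ hBc
      simpa using this
  obtain ⟨u, hu⟩ := Ultrafilter.exists_le (Filter.generate 𝒢)
  refine ⟨u, ?_, ?_⟩
  · intro x
    exact hu (Filter.mem_generate_of_mem (Or.inl ⟨x, rfl⟩))
  · intro A hA
    by_contra hbad
    have hc : Aᶜ ∈ u := hu (Filter.mem_generate_of_mem (Or.inr ⟨A, hbad, rfl⟩))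
    exact (Ultrafilter.compl_notMem_iff.mpr hA) hc

private lemma inDelta_mul {S : Type} (op : S → S → Option S) (hps : IsPSemigroup op)
    (mul : Ultrafilter S → Ultrafilter S → Ultrafilter S) (hmul : MulCompat op mul)
    {p q : Ultrafilter S} (hp : InDelta op p) (hq : InDelta op q) :
    InDelta op (mul p q) := by
  intro x
  rw [hmul p q hq]
  show {a : S | sInv op a (phiSet op x) ∈ q} ∈ p
  have hsub : phiSet op x ⊆ {a : S | sInv op a (phiSet op x) ∈ q} := by
    intro a ha
    obtain ⟨w, hw⟩ := Option.isSome_iff_exists.mp ha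
    have hsub2 : phiSet op a ∩ phiSet op w ⊆ sInv op a (phiSet op x) := by
      rintro t ⟨hta, htw⟩
      obtain ⟨v, hv⟩ := Option.isSome_iff_exists.mp hta
      obtain ⟨u, hu⟩ := Option.isSome_iff_exists.mp htw
      have hassoc := hps x a t
      rw [hw, hv] at hassoc
      simp only [Option.bind_some, Option.bind_some] at hassoc
      refine ⟨v, hv, ?_⟩
      show (op x v).isSome
      rw [← hassoc, hu]; rfl
    exact Filter.mem_of_superset (Filter.inter_mem (hq a) (hq w)) hsub2
  exact Filter.mem_of_superset (hp x) hsub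

private lemma shift_sub {S : Type} (op : S → S → Option S) (𝓐 : Set (Set S))
    (hsi : ShiftInvariant op 𝓐) {A₀ : Set S} (hA₀ : A₀ ∈ 𝓐) {x : S} {A : Set S}
    (h : ∀ a ∈ A₀, ∃ v, op a x = some v ∧ v ∈ A) :
    ∃ A₁ ∈ 𝓐, A₁ ⊆ A := by
  refine ⟨_, hsi A₀ hA₀ x (fun a ha => ?_), ?_⟩
  · obtain ⟨v, hv, _⟩ := h a ha; rw [hv]; rfl
  · rintro y ⟨a, ha, hy⟩
    obtain ⟨v, hv, hvA⟩ := h a ha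
    have : v = y := Option.some_injective _ (hv.symm.trans hy)
    exact this ▸ hvA

open PSG in
/-- A shift-invariant, adequately partition regular family of finite subsets of `S` meets
every piecewise syndetic set. -/
theorem pws_contains_member {S : Type}
    (op : S → S → Option S)
    (hps : IsPSemigroup op) (hcomm : IsComm op) (hadq : IsAdequate op)
    (mul : Ultrafilter S → Ultrafilter S → Ultrafilter S) (hmul : MulCompat op mul)
    (𝓐 : Set (Set S)) (hfin : ∀ A ∈ 𝓐, A.Finite)
    (hsi : ShiftInvariant op 𝓐) (hpr : AdequatelyPR op 𝓐)
    (E : Set S) (hE : IsPWSyndetic op mul E) :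
    ∃ A ∈ 𝓐, A ⊆ E := by
  classical
  by_cases h₀ : ∅ ∈ 𝓐
  · exact ⟨∅, h₀, Set.empty_subset E⟩
  obtain ⟨p, hEp, hpK⟩ := hE
  have hSne : Nonempty S := Filter.nonempty_of_neBot (p : Filter S)
  set J : Set (Ultrafilter S) :=
    {q | InDelta op q ∧ ∀ A ∈ q, ∃ A₀ ∈ 𝓐, A₀ ⊆ A} with hJ
  have hJideal : IsIdealK op mul J := by
    refine ⟨?_, fun q hq => hq.1, ?_, ?_⟩
    · obtain ⟨u, h1, h2⟩ := exists_good op 𝓐 hpr h₀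
      exact ⟨u, h1, h2⟩
    · intro r hr q hq
      refine ⟨inDelta_mul op hps mul hmul hr hq.1, ?_⟩
      intro A hA
      rw [hmul r q hq.1] at hA
      simp only [preMul, Set.mem_setOf_eq] at hA
      obtain ⟨a, ha⟩ := Ultrafilter.nonempty_of_mem hA
      obtain ⟨A₀, hA₀, hsub⟩ := hq.2 _ ha
      refine shift_sub op 𝓐 hsi hA₀ (x := a) ?_
      intro b hb
      obtain ⟨v, hv, hvA⟩ := hsub hb
      exact ⟨v, (hcomm b a).trans hv, hvA⟩
    · intro q hq r hr
      refine ⟨inDelta_mul op hps mul hmul hq.1 hr, ?_⟩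
      intro A hA
      rw [hmul q r hr] at hA
      simp only [preMul, Set.mem_setOf_eq] at hA
      obtain ⟨A₀, hA₀, hsub⟩ := hq.2 _ hA
      have hmem : (⋂ a ∈ A₀, sInv op a A) ∈ r :=
        (Filter.biInter_mem (hfin A₀ hA₀)).mpr fun a ha => hsub ha
      obtain ⟨t, ht⟩ := Ultrafilter.nonempty_of_mem hmem
      refine shift_sub op 𝓐 hsi hA₀ (x := t) ?_
      intro a ha
      exact Set.mem_iInter₂.mp ht a ha
  have hpJ : p ∈ J := Set.mem_sInter.mp hpK J hJideal
  exact hpJ.2 E hEp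
end

section
/- Let l ∈ ℕ and let 𝓟 be a finite family of set-polynomials over (P_f(ℕ^l),+) whose constant terms are empty. Then there exist q ∈ ℕ and the IP ring 𝓕^{(1)} = {α ∈ P_f(ℕ) : min α > q} such that {⟨P(α)⟩_{α∈𝓕^{(1)}} : P(X) ∈ 𝓟} is an adequate set of VIP systems in (P_f(ℕ^l),+). -/
open scoped Classical

namespace SetPoly

/-- `P_f(ℕ^l)`: nonempty finite subsets of `ℕ^l`. -/
def PFN (l : ℕ) : Type := {A : Finset (Fin l → ℕ) // A.Nonempty}

/-- the partial operation `A + B = A ∪ B`, defined iff `A ∩ B = ∅`. -/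
def unionOp (l : ℕ) (A B : PFN l) : Option (PFN l) :=
  if Disjoint A.1 B.1 then some ⟨A.1 ∪ B.1, A.2.mono Finset.subset_union_left⟩ else none

/-- a set-monomial `S_1 × ⋯ × S_l` in the variable `X`: `none` in coordinate `i` stands for
the symbol `X`, and `some c` stands for the singleton coefficient `{c}`. -/
abbrev Mono (l : ℕ) := Fin l → Option ℕ

/-- evaluation of a set-monomial at `α` (substituting `α` for `X`). -/
def evalMono {l : ℕ} (c : Mono l) (α : Finset ℕ) : Finset (Fin l → ℕ) :=
  Fintype.piFinset fun i => (c i).elim α (fun n => {n})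

/-- a set-polynomial is a nonempty finite set of set-monomials; its evaluation at `α`. -/
def evalPoly {l : ℕ} (P : Finset (Mono l)) (α : Finset ℕ) : Finset (Fin l → ℕ) :=
  P.biUnion fun c => evalMono c α

/-- evaluation of a set-polynomial as a member of `P_f(ℕ^l)` (with a junk value in the
degenerate case of an empty evaluation, which does not occur for nonempty `P` and `α`). -/
noncomputable def evalPolyS {l : ℕ} (P : Finset (Mono l)) (α : Finset ℕ) : PFN l :=
  if h : (evalPoly P α).Nonempty then ⟨_, h⟩
  else ⟨{fun _ => 0}, Finset.singleton_nonempty _⟩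

/-- the constant term of `P` is empty: every monomial of `P` has degree at least one. -/
def ConstantTermEmpty {l : ℕ} (P : Finset (Mono l)) : Prop := ∀ c ∈ P, ∃ i, c i = none

end SetPoly

namespace AuxVIP
open PSG SetPoly Finset

variable {l : ℕ}

abbrev Pt (l : ℕ) := Fin l → ℕ

noncomputable def toOpt (F : Finset (Pt l)) : Option (PFN l) :=
  if h : F.Nonempty then some ⟨F, h⟩ else none

lemma zop_toOpt (F G : Finset (Pt l)) (h : Disjoint F G) :
    zop (unionOp l) (toOpt F) (toOpt G) = some (toOpt (F ∪ G)) := by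
  rcases F.eq_empty_or_nonempty with rfl | hF
  · simp [toOpt, zop]
  rcases G.eq_empty_or_nonempty with rfl | hG
  · simp [toOpt, hF, zop, Finset.union_empty]
  · have hFG : (F ∪ G).Nonempty := hF.mono Finset.subset_union_left
    simp only [toOpt, dif_pos hF, dif_pos hG, dif_pos hFG]
    simp [zop, unionOp, h]
    exact ⟨_, rfl, rfl⟩

lemma mem_foldrUnion (L : List (Finset (Pt l))) (x : Pt l) :
    x ∈ L.foldr (· ∪ ·) ∅ ↔ ∃ F ∈ L, x ∈ F := by
  induction L with
  | nil => simp
  | cons F L ih => simp [List.foldr, Finset.mem_union, ih]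

lemma zsum_toOpt (L : List (Finset (Pt l))) (h : L.Pairwise Disjoint) :
    zsum (unionOp l) (L.map toOpt) = some (toOpt (L.foldr (· ∪ ·) ∅)) := by
  induction L with
  | nil => simp [zsum, toOpt]
  | cons F L ih =>
    have hd : Disjoint F (L.foldr (· ∪ ·) ∅) := by
      rw [Finset.disjoint_left]
      intro x hx hx'
      rcases (mem_foldrUnion L x).1 hx' with ⟨G, hG, hxG⟩
      exact Finset.disjoint_left.1 ((List.pairwise_cons.1 h).1 G hG) hx hxG
    have : zsum (unionOp l) ((F :: L).map toOpt)
        = (zsum (unionOp l) (L.map toOpt)).bind fun y => zop (unionOp l) (toOpt F) y := rfl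
    rw [this, ih (List.pairwise_cons.1 h).2]
    simpa using zop_toOpt F _ hd

lemma zsumFinset_toOpt {β : Type} [DecidableEq β] (A : Finset β) (F : β → Finset (Pt l))
    (h : ∀ a ∈ A, ∀ b ∈ A, a ≠ b → Disjoint (F a) (F b)) :
    zsumFinset (unionOp l) A (fun a => toOpt (F a)) = some (toOpt (A.biUnion F)) := by
  have hnd : A.toList.Pairwise (· ≠ ·) := A.nodup_toList
  have hp : (A.toList.map F).Pairwise Disjoint := by
    rw [List.pairwise_map]
    exact hnd.imp_of_mem (fun {a b} ha hb hne =>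
      h a (Finset.mem_toList.1 ha) b (Finset.mem_toList.1 hb) hne)
  have key := zsum_toOpt (A.toList.map F) hp
  have h1 : A.toList.map (fun a => toOpt (F a)) = (A.toList.map F).map toOpt := by
    rw [List.map_map]; rfl
  have h2 : (A.toList.map F).foldr (· ∪ ·) ∅ = A.biUnion F := by
    ext x
    rw [mem_foldrUnion, Finset.mem_biUnion]
    constructor
    · rintro ⟨G, hG, hxG⟩
      rcases List.mem_map.1 hG with ⟨a, ha, rfl⟩
      exact ⟨a, Finset.mem_toList.1 ha, hxG⟩
    · rintro ⟨a, ha, hxa⟩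
      exact ⟨F a, List.mem_map.2 ⟨a, Finset.mem_toList.2 ha, rfl⟩, hxa⟩
  rw [zsumFinset, h1, key, h2]

lemma unionOp_isSome {A B : PFN l} : (unionOp l A B).isSome ↔ Disjoint A.1 B.1 := by
  by_cases h : Disjoint A.1 B.1 <;> simp [unionOp, h] <;> rfl

lemma mem_evalMono {c : Mono l} {α : Finset ℕ} {x : Pt l} :
    x ∈ evalMono c α ↔ ∀ i, (c i).elim (x i ∈ α) (fun k => x i = k) := by
  rw [evalMono, Fintype.mem_piFinset]
  apply forall_congr'
  intro i
  cases c i <;> simp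

lemma evalPoly_mono {P : Finset (Mono l)} {α β : Finset ℕ} (h : α ⊆ β) :
    evalPoly P α ⊆ evalPoly P β := by
  intro x hx
  rcases Finset.mem_biUnion.1 hx with ⟨c, hc, hxc⟩
  refine Finset.mem_biUnion.2 ⟨c, hc, ?_⟩
  rw [mem_evalMono] at hxc ⊢
  intro i
  have hxi := hxc i
  revert hxi
  cases c i with
  | none => exact fun h' => h h'
  | some k => exact id

def hiSet (Q : ℕ) (x : Pt l) : Finset ℕ := (Finset.univ.image x).filter (fun v => Q < v)

lemma mem_hiSet {Q v : ℕ} {x : Pt l} : v ∈ hiSet Q x ↔ (∃ i, x i = v) ∧ Q < v := by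
  simp [hiSet]

lemma card_hiSet_le (Q : ℕ) (x : Pt l) : (hiSet Q x).card ≤ l := by
  calc (hiSet Q x).card ≤ (Finset.univ.image x).card := Finset.card_filter_le _ _
    _ ≤ (Finset.univ : Finset (Fin l)).card := Finset.card_image_le
    _ = l := by simp

def tr (Q a : ℕ) (x : Pt l) : Pt l := fun i => if Q < x i then a else x i

lemma tr_mono_iff {Q a : ℕ} (ha : Q < a) {c : Mono l} (hc : ∀ i k, c i = some k → k ≤ Q)
    {x : Pt l} : x ∈ evalMono c (hiSet Q x) ↔ tr Q a x ∈ evalMono c ({a} : Finset ℕ) := by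
  rw [mem_evalMono, mem_evalMono]
  apply forall_congr'; intro i
  cases hci : c i with
  | none =>
    simp only [Option.elim, Finset.mem_singleton]
    constructor
    · intro hx
      have : Q < x i := (mem_hiSet.1 hx).2
      simp [tr, this]
    · intro hx
      by_cases h : Q < x i
      · exact mem_hiSet.2 ⟨⟨i, rfl⟩, h⟩
      · exfalso; simp [tr, h] at hx; omega
  | some k =>
    have hk := hc i k hci
    simp only [Option.elim]
    constructor
    · intro hx
      simp only [tr, hx, if_neg (Nat.not_lt.2 hk)]
    · intro hx
      by_cases h : Q < x i
      · exfalso; simp [tr, h] at hx; omega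
      · simpa [tr, h] using hx

lemma hiSet_tr {Q a : ℕ} (ha : Q < a) {x : Pt l} (hx : (hiSet Q x).Nonempty) :
    hiSet Q (tr Q a x) = {a} := by
  apply Finset.Subset.antisymm
  · intro v hv
    rcases mem_hiSet.1 hv with ⟨⟨i, hi⟩, hv'⟩
    by_cases h : Q < x i
    · simp only [tr, if_pos h] at hi
      simp [← hi]
    · simp only [tr, if_neg h] at hi
      omega
  · rcases hx with ⟨v, hv⟩
    rcases mem_hiSet.1 hv with ⟨⟨i, hii⟩, hv'⟩
    intro w hw
    rw [Finset.mem_singleton] at hw; subst hw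
    refine mem_hiSet.2 ⟨⟨i, ?_⟩, ha⟩
    simp only [tr]
    rw [if_pos]; omega

lemma tr_poly_iff {Q a : ℕ} (ha : Q < a) {P : Finset (Mono l)}
    (hP : ∀ c ∈ P, ∀ i k, c i = some k → k ≤ Q) {x : Pt l} :
    x ∈ evalPoly P (hiSet Q x) ↔ tr Q a x ∈ evalPoly P ({a} : Finset ℕ) := by
  rw [evalPoly, evalPoly, Finset.mem_biUnion, Finset.mem_biUnion]
  exact exists_congr fun c => and_congr_right fun hc => tr_mono_iff ha (hP c hc)

def Tfun (Q : ℕ) (𝓟' : Finset (Finset (Mono l))) (x : Pt l) : Finset (Finset (Mono l)) :=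
  𝓟'.filter (fun P => x ∈ evalPoly P (hiSet Q x))

lemma Tfun_tr {Q a : ℕ} (ha : Q < a) {𝓟' : Finset (Finset (Mono l))}
    (h𝓟' : ∀ P ∈ 𝓟', ∀ c ∈ P, ∀ i k, c i = some k → k ≤ Q)
    {x : Pt l} (hx : (hiSet Q x).Nonempty) :
    Tfun Q 𝓟' (tr Q a x) = Tfun Q 𝓟' x := by
  unfold Tfun
  apply Finset.filter_congr
  intro P hP
  rw [hiSet_tr ha hx]
  exact (tr_poly_iff ha (h𝓟' P hP)).symm

def msetF (Q : ℕ) (P : Finset (Mono l)) (γ : Finset ℕ) : Finset (Pt l) :=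
  (evalPoly P γ).filter (fun x => hiSet Q x = γ)

def nsetF (Q : ℕ) (𝓟' : Finset (Finset (Mono l))) (T : Finset (Finset (Mono l)))
    (γ : Finset ℕ) : Finset (Pt l) :=
  (𝓟'.biUnion fun P => evalPoly P γ).filter (fun x => hiSet Q x = γ ∧ Tfun Q 𝓟' x = T)

lemma hi_spec {Q : ℕ} {P : Finset (Mono l)} (hP : ∀ c ∈ P, ∀ i k, c i = some k → k ≤ Q)
    {α : Finset ℕ} (hα : ∀ v ∈ α, Q < v) {x : Pt l} (hx : x ∈ evalPoly P α) :
    hiSet Q x ⊆ α ∧ x ∈ evalPoly P (hiSet Q x) ∧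
      (ConstantTermEmpty P → (hiSet Q x).Nonempty) := by
  rcases Finset.mem_biUnion.1 hx with ⟨c, hc, hxc⟩
  rw [mem_evalMono] at hxc
  refine ⟨?_, ?_, ?_⟩
  · intro v hv
    rcases mem_hiSet.1 hv with ⟨⟨i, hi⟩, hv'⟩
    have := hxc i
    cases hci : c i with
    | none => rw [hci] at this; rwa [hi] at this
    | some k =>
      rw [hci] at this
      simp only [Option.elim] at this
      have := hP c hc i k hci
      omega
  · refine Finset.mem_biUnion.2 ⟨c, hc, ?_⟩
    rw [mem_evalMono]
    intro i
    have := hxc i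
    cases hci : c i with
    | none =>
      rw [hci] at this
      exact mem_hiSet.2 ⟨⟨i, rfl⟩, hα _ this⟩
    | some k => rw [hci] at this; exact this
  · intro hCTE
    rcases hCTE c hc with ⟨i, hci⟩
    have := hxc i
    rw [hci] at this
    exact ⟨x i, mem_hiSet.2 ⟨⟨i, rfl⟩, hα _ this⟩⟩

lemma mem_fdSubsets {d : ℕ} {α γ : Finset ℕ} :
    γ ∈ fdSubsets d α ↔ γ ⊆ α ∧ γ.Nonempty ∧ γ.card ≤ d := by
  simp [fdSubsets, Finset.mem_filter, Finset.mem_powerset, and_assoc]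

lemma evalMono_nonempty {c : Mono l} {α : Finset ℕ} (hα : α.Nonempty) :
    (evalMono c α).Nonempty := by
  rcases hα with ⟨a, ha⟩
  refine ⟨fun i => (c i).getD a, ?_⟩
  rw [mem_evalMono]
  intro i
  cases c i <;> simp [ha]

end AuxVIP

namespace AuxVIP
open PSG SetPoly Finset

variable {l : ℕ}

lemma mem_msetF {Q : ℕ} {P : Finset (Mono l)} {γ : Finset ℕ} {x : Pt l} :
    x ∈ msetF Q P γ ↔ x ∈ evalPoly P γ ∧ hiSet Q x = γ := Finset.mem_filter

lemma mem_nsetF {Q : ℕ} {𝓟' T : Finset (Finset (Mono l))} {γ : Finset ℕ} {x : Pt l} :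
    x ∈ nsetF Q 𝓟' T γ ↔ (x ∈ 𝓟'.biUnion fun P => evalPoly P γ) ∧
      (hiSet Q x = γ ∧ Tfun Q 𝓟' x = T) := Finset.mem_filter

end AuxVIP


open PSG SetPoly AuxVIP in
theorem set_polynomials_adequate_VIP' (l : ℕ) (hl : 0 < l)
    (𝓟 : Finset (Finset (Mono l)))
    (h𝓟 : ∀ P ∈ 𝓟, P.Nonempty ∧ ConstantTermEmpty P) :
    ∃ Q : ℕ, IsAdequateVIPFamily (unionOp l)
      (fun α => ∀ x ∈ α, Q < x)
      (fun (P : {P // P ∈ 𝓟}) (α : Finset ℕ) => evalPolyS P.1 α) := by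
  classical
  set Q := 𝓟.sup (fun P => P.sup fun c => Finset.univ.sup fun i => (c i).getD 0) with hQdef
  have hQ : ∀ P ∈ 𝓟, ∀ c ∈ P, ∀ i k, c i = some k → k ≤ Q := by
    intro P hP c hc i k hk
    have h1 : (c i).getD 0 ≤ Finset.univ.sup fun i => (c i).getD 0 :=
      Finset.le_sup (f := fun i => (c i).getD 0) (Finset.mem_univ i)
    have h2 : (Finset.univ.sup fun i => (c i).getD 0)
        ≤ P.sup fun c => Finset.univ.sup fun i => (c i).getD 0 :=
      Finset.le_sup (f := fun c => Finset.univ.sup fun i => (c i).getD 0) hc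
    have h3 : (P.sup fun c => Finset.univ.sup fun i => (c i).getD 0) ≤ Q :=
      Finset.le_sup (f := fun P => P.sup fun c => Finset.univ.sup fun i => (c i).getD 0) hP
    rw [hk] at h1
    exact le_trans (le_trans h1 h2) h3
  refine ⟨Q, ?_⟩
  set P0 : Finset (Mono l) := {fun _ => none} with hP0def
  set 𝓟' := insert P0 𝓟 with h𝓟'def
  have h𝓟'Q : ∀ P ∈ 𝓟', ∀ c ∈ P, ∀ i k, c i = some k → k ≤ Q := by
    intro P hP
    rcases Finset.mem_insert.1 hP with rfl | hP
    · intro c hc i k hk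
      rw [hP0def, Finset.mem_singleton] at hc
      subst hc
      simp at hk
    · exact hQ P hP
  have h𝓟'CTE : ∀ P ∈ 𝓟', P.Nonempty ∧ ConstantTermEmpty P := by
    intro P hP
    rcases Finset.mem_insert.1 hP with rfl | hP
    · refine ⟨by simp [hP0def], fun c hc => ?_⟩
      rw [hP0def, Finset.mem_singleton] at hc
      subst hc
      exact ⟨⟨0, hl⟩, rfl⟩
    · exact h𝓟 P hP
  have hx0 : (fun _ => Q + 1 : Pt l) ∈ evalPoly P0 ({Q+1} : Finset ℕ) := by
    refine Finset.mem_biUnion.2 ⟨fun _ => none, by simp [hP0def], ?_⟩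
    rw [mem_evalMono]
    intro i; simp
  set 𝒯 := (𝓟'.biUnion fun P => evalPoly P ({Q+1} : Finset ℕ)).image (Tfun Q 𝓟') with h𝒯def
  have h𝒯ne : 𝒯.Nonempty :=
    ⟨_, Finset.mem_image_of_mem _ (Finset.mem_biUnion.2 ⟨P0, Finset.mem_insert_self _ _, hx0⟩)⟩
  have ht : 0 < 𝒯.card := Finset.card_pos.2 h𝒯ne
  set e : Fin 𝒯.card → Finset (Finset (Mono l)) := fun k => (𝒯.equivFin.symm k : _) with hedef
  have he_mem : ∀ k, e k ∈ 𝒯 := fun k => (𝒯.equivFin.symm k).2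
  have he_inj : Function.Injective e := by
    intro a b hab
    have : 𝒯.equivFin.symm a = 𝒯.equivFin.symm b := Subtype.ext hab
    exact 𝒯.equivFin.symm.injective this
  have he_surj : ∀ T ∈ 𝒯, ∃ k, e k = T := by
    intro T hT
    exact ⟨𝒯.equivFin ⟨T, hT⟩, by simp [hedef]⟩
  have hTmem : ∀ x : Pt l, (hiSet Q x).Nonempty →
      (∃ P ∈ 𝓟', x ∈ evalPoly P (hiSet Q x)) → Tfun Q 𝓟' x ∈ 𝒯 := by
    rintro x hx ⟨P, hP, hxP⟩
    have h1 : tr Q (Q+1) x ∈ evalPoly P ({Q+1} : Finset ℕ) :=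
      (tr_poly_iff (Nat.lt_succ_self Q) (h𝓟'Q P hP)).1 hxP
    have h2 := Tfun_tr (Nat.lt_succ_self Q) h𝓟'Q hx (a := Q+1) (x := x)
    rw [← h2]
    exact Finset.mem_image_of_mem _ (Finset.mem_biUnion.2 ⟨P, hP, h1⟩)
  have hrealize : ∀ T ∈ 𝒯, ∀ a : ℕ, Q < a → (nsetF Q 𝓟' T ({a} : Finset ℕ)).Nonempty := by
    intro T hT a ha
    rcases Finset.mem_image.1 hT with ⟨y, hy, rfl⟩
    rcases Finset.mem_biUnion.1 hy with ⟨P, hP, hyP⟩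
    rcases Finset.mem_biUnion.1 hyP with ⟨c, hc, hyc⟩
    rw [mem_evalMono] at hyc
    have hhi : hiSet Q y = {Q+1} := by
      apply Finset.Subset.antisymm
      · intro v hv
        rcases mem_hiSet.1 hv with ⟨⟨i, hi⟩, hv'⟩
        have hyi := hyc i
        cases hci : c i with
        | some k =>
          rw [hci] at hyi
          simp only [Option.elim] at hyi
          have hk := h𝓟'Q P hP c hc i k hci
          have hvk : v = k := by rw [← hi, hyi]
          exact absurd hv' (Nat.not_lt.2 (by rw [hvk]; exact hk))
        | none =>
          rw [hci] at hyi
          simp only [Option.elim] at hyi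
          rw [← hi]
          exact hyi
      · rw [Finset.singleton_subset_iff]
        rcases (h𝓟'CTE P hP).2 c hc with ⟨i, hci⟩
        have hyi := hyc i
        rw [hci] at hyi
        simp only [Option.elim, Finset.mem_singleton] at hyi
        exact mem_hiSet.2 ⟨⟨i, hyi⟩, Nat.lt_succ_self Q⟩
    have hyhi : y ∈ evalPoly P (hiSet Q y) := by rw [hhi]; exact hyP
    have hne : (hiSet Q y).Nonempty := by rw [hhi]; exact Finset.singleton_nonempty _
    refine ⟨tr Q a y, mem_nsetF.2 ⟨Finset.mem_biUnion.2
      ⟨P, hP, (tr_poly_iff ha (h𝓟'Q P hP)).1 hyhi⟩,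
      hiSet_tr ha hne, Tfun_tr ha h𝓟'Q hne⟩⟩
  refine ⟨l, 𝒯.card, hl, ht, fun i γ => toOpt (msetF Q i.1 γ),
    fun k γ => toOpt (nsetF Q 𝓟' (e k) γ),
    fun i => Finset.univ.filter (fun k => i.1 ∈ e k), ?_, ?_, ?_, ?_⟩
  · -- (1) m generates v
    intro i α hα hαQ
    have hdisj : ∀ γ ∈ fdSubsets l α, ∀ γ' ∈ fdSubsets l α, γ ≠ γ' →
        Disjoint (msetF Q i.1 γ) (msetF Q i.1 γ') := by
      intro γ _ γ' _ hne
      rw [Finset.disjoint_left]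
      intro x hx hx'
      exact hne ((mem_msetF.1 hx).2.symm.trans (mem_msetF.1 hx').2)
    rw [zsumFinset_toOpt _ _ hdisj]
    have hP𝓟' : i.1 ∈ 𝓟' := Finset.mem_insert_of_mem i.2
    have hdecomp : (fdSubsets l α).biUnion (msetF Q i.1) = evalPoly i.1 α := by
      apply Finset.Subset.antisymm
      · intro x hx
        rcases Finset.mem_biUnion.1 hx with ⟨γ, hγ, hxγ⟩
        exact evalPoly_mono (mem_fdSubsets.1 hγ).1 (mem_msetF.1 hxγ).1
      · intro x hx
        obtain ⟨hs, hxh, hne⟩ := hi_spec (h𝓟'Q i.1 hP𝓟') hαQ hx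
        exact Finset.mem_biUnion.2 ⟨hiSet Q x, mem_fdSubsets.2
          ⟨hs, hne (h𝓟 i.1 i.2).2, card_hiSet_le Q x⟩, mem_msetF.2 ⟨hxh, rfl⟩⟩
    rw [hdecomp]
    have hne : (evalPoly i.1 α).Nonempty := by
      obtain ⟨c, hc⟩ := (h𝓟 i.1 i.2).1
      obtain ⟨y, hy⟩ := evalMono_nonempty (c := c) hα
      exact ⟨y, Finset.mem_biUnion.2 ⟨c, hc, hy⟩⟩
    simp [toOpt, evalPolyS, hne]
  · -- (2) each n generates a VIP system
    intro k
    refine ⟨fun α => if h : ((fdSubsets l α).biUnion (nsetF Q 𝓟' (e k))).Nonempty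
        then ⟨_, h⟩ else ⟨{fun _ => 0}, Finset.singleton_nonempty _⟩, ?_⟩
    intro α hα hαQ
    have hdisj : ∀ γ ∈ fdSubsets l α, ∀ γ' ∈ fdSubsets l α, γ ≠ γ' →
        Disjoint (nsetF Q 𝓟' (e k) γ) (nsetF Q 𝓟' (e k) γ') := by
      intro γ _ γ' _ hne
      rw [Finset.disjoint_left]
      intro x hx hx'
      exact hne ((mem_nsetF.1 hx).2.1.symm.trans (mem_nsetF.1 hx').2.1)
    rw [zsumFinset_toOpt _ _ hdisj]
    have hne : ((fdSubsets l α).biUnion (nsetF Q 𝓟' (e k))).Nonempty := by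
      rcases hα with ⟨a, ha⟩
      rcases hrealize (e k) (he_mem k) a (hαQ a ha) with ⟨x, hx⟩
      exact ⟨x, Finset.mem_biUnion.2 ⟨{a}, mem_fdSubsets.2
        ⟨Finset.singleton_subset_iff.2 ha, Finset.singleton_nonempty _, by rw [Finset.card_singleton]; exact hl⟩, hx⟩⟩
    simp [toOpt, hne]
  · -- (3) adequacy
    intro H hH
    refine ⟨Q ⊔ H.sup (fun A => A.1.sup fun p => Finset.univ.sup p), ?_⟩
    set M := Q ⊔ H.sup (fun A => A.1.sup fun p => Finset.univ.sup p) with hMdef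
    intro l' hl' γ hγinj hγgood hγbig
    have hdisj : ∀ ij ∈ (Finset.univ : Finset (Fin 𝒯.card × Fin l')), ∀ ij' ∈
        (Finset.univ : Finset (Fin 𝒯.card × Fin l')), ij ≠ ij' →
        Disjoint (nsetF Q 𝓟' (e ij.1) (γ ij.2)) (nsetF Q 𝓟' (e ij'.1) (γ ij'.2)) := by
      intro ij _ ij' _ hne
      rw [Finset.disjoint_left]
      intro x hx hx'
      obtain ⟨-, h1, h2⟩ := mem_nsetF.1 hx
      obtain ⟨-, h1', h2'⟩ := mem_nsetF.1 hx'
      exact hne (Prod.ext (he_inj (h2.symm.trans h2')) (hγinj (h1.symm.trans h1')))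
    refine ⟨_, zsumFinset_toOpt Finset.univ
      (fun ij : Fin 𝒯.card × Fin l' => nsetF Q 𝓟' (e ij.1) (γ ij.2)) hdisj, ?_⟩
    set U := Finset.univ.biUnion
      (fun ij : Fin 𝒯.card × Fin l' => nsetF Q 𝓟' (e ij.1) (γ ij.2)) with hUdef
    rcases U.eq_empty_or_nonempty with hU | hU
    · left; simp [toOpt, hU]
    · right
      refine ⟨⟨U, hU⟩, by simp [toOpt, hU], ?_⟩
      simp only [sigmaSet, Set.mem_setOf_eq]
      intro A hA
      refine unionOp_isSome.2 ?_; rw [Finset.disjoint_left]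
      intro p hpA hpU
      rcases Finset.mem_biUnion.1 hpU with ⟨ij, -, hp⟩
      obtain ⟨-, h1, -⟩ := mem_nsetF.1 hp
      rcases Finset.not_subset.1 (hγbig ij.2) with ⟨v, hv, hvM⟩
      rw [← h1] at hv
      rcases mem_hiSet.1 hv with ⟨⟨i, hi⟩, -⟩
      have hple : p i ≤ M := by
        calc p i ≤ Finset.univ.sup p := Finset.le_sup (Finset.mem_univ i)
          _ ≤ A.1.sup (fun p => Finset.univ.sup p) :=
            Finset.le_sup (f := fun p => Finset.univ.sup p) hpA
          _ ≤ H.sup (fun A => A.1.sup fun p => Finset.univ.sup p) :=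
            Finset.le_sup (f := fun A => A.1.sup fun p => Finset.univ.sup p) hA
          _ ≤ M := le_sup_right
      have hvM' : M < v := Nat.lt_of_not_le (by simpa using hvM)
      exact absurd (hi ▸ hple) (Nat.not_le.2 hvM')
  · -- (4) decomposition of m via n over E
    intro i γ hγne hγcard
    have hdisj : ∀ k ∈ Finset.univ.filter (fun k => i.1 ∈ e k),
        ∀ k' ∈ Finset.univ.filter (fun k => i.1 ∈ e k), k ≠ k' →
        Disjoint (nsetF Q 𝓟' (e k) γ) (nsetF Q 𝓟' (e k') γ) := by
      intro k _ k' _ hne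
      rw [Finset.disjoint_left]
      intro x hx hx'
      exact hne (he_inj ((mem_nsetF.1 hx).2.2.symm.trans (mem_nsetF.1 hx').2.2))
    rw [zsumFinset_toOpt _ _ hdisj]
    have hP𝓟' : i.1 ∈ 𝓟' := Finset.mem_insert_of_mem i.2
    have hdecomp : (Finset.univ.filter (fun k => i.1 ∈ e k)).biUnion
        (fun k => nsetF Q 𝓟' (e k) γ) = msetF Q i.1 γ := by
      apply Finset.Subset.antisymm
      · intro x hx
        rcases Finset.mem_biUnion.1 hx with ⟨k, hk, hxk⟩
        obtain ⟨-, h1, h2⟩ := mem_nsetF.1 hxk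
        have hPk : i.1 ∈ e k := (Finset.mem_filter.1 hk).2
        rw [← h2] at hPk
        have hx2 : x ∈ evalPoly i.1 (hiSet Q x) := (Finset.mem_filter.1 hPk).2
        rw [h1] at hx2
        exact mem_msetF.2 ⟨hx2, h1⟩
      · intro x hx
        obtain ⟨hx1, hhi⟩ := mem_msetF.1 hx
        have hxhi : x ∈ evalPoly i.1 (hiSet Q x) := by rw [hhi]; exact hx1
        have hPT : i.1 ∈ Tfun Q 𝓟' x := Finset.mem_filter.2 ⟨hP𝓟', hxhi⟩
        have hhine : (hiSet Q x).Nonempty := by rw [hhi]; exact hγne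
        rcases he_surj _ (hTmem x hhine ⟨i.1, hP𝓟', hxhi⟩) with ⟨k, hk⟩
        refine Finset.mem_biUnion.2 ⟨k,
          Finset.mem_filter.2 ⟨Finset.mem_univ k, by rw [hk]; exact hPT⟩, ?_⟩
        exact mem_nsetF.2 ⟨Finset.mem_biUnion.2 ⟨i.1, hP𝓟', hx1⟩, hhi, hk.symm⟩
    rw [hdecomp]


open PSG SetPoly in
/-- For a finite family `𝓟` of set-polynomials with empty constant term there are `Q ∈ ℕ`
and the IP ring `𝓕^{(1)} = {α : min α > Q}` such that `{⟨P(α)⟩ : P ∈ 𝓟}` is an adequate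
set of VIP systems. -/
theorem set_polynomials_adequate_VIP (l : ℕ) (hl : 0 < l)
    (𝓟 : Finset (Finset (Mono l)))
    (h𝓟 : ∀ P ∈ 𝓟, P.Nonempty ∧ ConstantTermEmpty P) :
    ∃ Q : ℕ, IsAdequateVIPFamily (unionOp l)
      (fun α => ∀ x ∈ α, Q < x)
      (fun (P : {P // P ∈ 𝓟}) (α : Finset ℕ) => evalPolyS P.1 α) :=
  set_polynomials_adequate_VIP' l hl 𝓟 h𝓟
end
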